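/- arXiv:1908.11478 — 4 statements merged into one kernel-verified Lean document; each statement's English description precedes it below -/
import Mathlib

section
/- For every integer k ≥ 3, if G is a finite connected graph containing no induced path on k vertices, then the cop number of G is at most k − 2. -/
open SimpleGraph

/-- The sequence of positions in a play of the Cops and Robber game:
`(copsRobberSeq init F rob r₀ t).1` are the cop positions and `.2` the robber
position after round `t`. In each round the cops move first, then the robber. -/
def copsRobberSeq {V : Type*} {n : ℕ} (init : Fin n → V)
    (F : (Fin n → V) → V → (Fin n → V)) (rob : (Fin n → V) → V → V) (r₀ : V) :
    ℕ → (Fin n → V) × V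
  | 0 => (init, r₀)
  | t + 1 =>
      let p := copsRobberSeq init F rob r₀ t
      let c' := F p.1 p.2
      (c', rob c' p.2)

/-- `CopWinWith G n` means that `n` cops have a strategy on the graph `G`
(choice of initial positions and a move function, each move staying put or
going to an adjacent vertex) that captures the robber against every robber
strategy: at some round, some cop occupies the robber's current vertex. -/
def CopWinWith {V : Type*} (G : SimpleGraph V) (n : ℕ) : Prop :=
  ∃ (init : Fin n → V) (F : (Fin n → V) → V → (Fin n → V)),
    (∀ c r i, F c r i = c i ∨ G.Adj (c i) (F c r i)) ∧
    ∀ (r₀ : V) (rob : (Fin n → V) → V → V),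
      (∀ c r, rob c r = r ∨ G.Adj r (rob c r)) →
      ∃ t, (∃ i, (copsRobberSeq init F rob r₀ t).1 i = (copsRobberSeq init F rob r₀ t).2) ∨
           (∃ i, (copsRobberSeq init F rob r₀ (t + 1)).1 i = (copsRobberSeq init F rob r₀ t).2)

/-- The cop number of `G`: the least `n` such that `n` cops can guarantee capture. -/
noncomputable def copNumber {V : Type*} (G : SimpleGraph V) : ℕ :=
  sInf {n | CopWinWith G n}

namespace CopsAux
open Classical Relation

variable {V : Type*} (G : SimpleGraph V)

/-- `y` is in the closed neighborhood of `x`. -/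
def nbd (x y : V) : Prop := x = y ∨ G.Adj x y

/-- adjacency restricted to a set -/
def rel (s : Set V) (a b : V) : Prop := G.Adj a b ∧ a ∈ s ∧ b ∈ s

/-- connected component of `r` inside `s` -/
def comp (s : Set V) (r : V) : Set V := {x | x ∈ s ∧ ReflTransGen (rel G s) r x}

lemma comp_subset (s : Set V) (r : V) : comp G s r ⊆ s := fun _ h => h.1

lemma mem_comp_self {s : Set V} {r : V} (h : r ∈ s) : r ∈ comp G s r :=
  ⟨h, ReflTransGen.refl⟩

lemma comp_closed {s : Set V} {r x y : V} (hx : x ∈ comp G s r) (hy : y ∈ s)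
    (hadj : G.Adj x y) : y ∈ comp G s r :=
  ⟨hy, hx.2.tail ⟨hadj, hx.1, hy⟩⟩

lemma rel_symm (s : Set V) : Symmetric (rel G s) := fun _ _ h => ⟨h.1.symm, h.2.2, h.2.1⟩

lemma comp_eq_of_mem {s : Set V} {r r' : V} (h : r' ∈ comp G s r) :
    comp G s r' = comp G s r := by
  have hsymm : ∀ {a b}, ReflTransGen (rel G s) a b → ReflTransGen (rel G s) b a := by
    haveI : Std.Symm (rel G s) := ⟨rel_symm G s⟩
    intro a b h
    exact Std.Symm.symm _ _ h
  ext x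
  constructor
  · rintro ⟨hx, hr⟩; exact ⟨hx, h.2.trans hr⟩
  · rintro ⟨hx, hr⟩; exact ⟨hx, (hsymm h.2).trans hr⟩

variable (v₀ : V)

/-- pick an element of a set (or default `v₀`) -/
noncomputable def pickA (A : Set V) : V := if h : A.Nonempty then h.choose else v₀

lemma pickA_mem {A : Set V} (h : A.Nonempty) : pickA v₀ A ∈ A := by
  rw [pickA, dif_pos h]; exact h.choose_spec

/-- The Gyárfás-path state: `(St G v₀ i r).1` is the `i`-th path vertex `uᵢ`,
`(St G v₀ i r).2` is the ambient set for the `i`-th robber territory. -/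
noncomputable def St : ℕ → V → V × Set V
  | 0, _ => (v₀, Set.univ)
  | (i+1), r =>
      let p := St i r
      let Ci := comp G p.2 r
      let s' := Ci \ {x | nbd G p.1 x}
      let Cn := comp G s' r
      (pickA v₀ {x | x ∈ Ci ∧ G.Adj p.1 x ∧ ∃ y ∈ Cn, G.Adj x y}, s')

/-- `i`-th Gyárfás path vertex. -/
noncomputable def u (i : ℕ) (r : V) : V := (St G v₀ i r).1
/-- robber territory at stage `i`. -/
noncomputable def CC (i : ℕ) (r : V) : Set V := comp G (St G v₀ i r).2 r
/-- candidate set for next path vertex. -/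
noncomputable def A (i : ℕ) (r : V) : Set V :=
  {x | x ∈ CC G v₀ i r ∧ G.Adj (u G v₀ i r) x ∧ ∃ y ∈ CC G v₀ (i+1) r, G.Adj x y}

lemma St_zero (r : V) : St G v₀ 0 r = (v₀, Set.univ) := rfl

lemma St_succ_snd (i : ℕ) (r : V) :
    (St G v₀ (i+1) r).2 = CC G v₀ i r \ {x | nbd G (u G v₀ i r) x} := rfl

lemma St_succ_fst (i : ℕ) (r : V) :
    (St G v₀ (i+1) r).1 = pickA v₀ (A G v₀ i r) := rfl

lemma CC_succ (i : ℕ) (r : V) :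
    CC G v₀ (i+1) r = comp G (CC G v₀ i r \ {x | nbd G (u G v₀ i r) x}) r := rfl

lemma CC_succ_subset (i : ℕ) (r : V) :
    CC G v₀ (i+1) r ⊆ CC G v₀ i r \ {x | nbd G (u G v₀ i r) x} := by
  rw [CC_succ]; exact comp_subset _ _ _

lemma CC_mono : ∀ {i j : ℕ}, i ≤ j → ∀ r, CC G v₀ j r ⊆ CC G v₀ i r := by
  intro i j h
  induction j with
  | zero =>
      intro r
      have : i = 0 := by omega
      subst this; exact fun x hx => hx
  | succ l ih =>
      intro r
      rcases Nat.lt_or_ge i (l+1) with hl | hl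
      · exact fun x hx => ih (by omega) r ((CC_succ_subset G v₀ l r hx).1)
      · have : i = l + 1 := by omega
        subst this; exact fun x hx => hx

lemma u_mem_A {i : ℕ} {r : V} (h : (A G v₀ i r).Nonempty) :
    u G v₀ (i+1) r ∈ A G v₀ i r := by
  rw [u, St_succ_fst]; exact pickA_mem v₀ h

/-- generic "first exit" lemma -/
lemma firstExit {α : Type*} {R : α → α → Prop} {P : α → Prop} {a b : α}
    (h : ReflTransGen R a b) (ha : P a) (hb : ¬ P b) :
    ∃ w z, ReflTransGen R a w ∧ R w z ∧ P w ∧ ¬ P z := by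
  induction h with
  | refl => exact absurd ha hb
  | @tail c d h₁ h₂ ih =>
      by_cases hc : P c
      · exact ⟨c, d, h₁, h₂, hc, hb⟩
      · exact ih hc

/-- main argument producing a member of `A i r` -/
lemma mainArg {i : ℕ} {r : V} (hg : r ∈ CC G v₀ (i+1) r)
    (hub : ∃ y, y ∈ CC G v₀ i r ∧ G.Adj (u G v₀ i r) y) :
    (A G v₀ i r).Nonempty := by
  obtain ⟨y, hyC, hyadj⟩ := hub
  have hynot : y ∉ CC G v₀ (i+1) r := fun h =>
    (CC_succ_subset G v₀ i r h).2 (Or.inr hyadj)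
  have hreach : ReflTransGen (rel G (St G v₀ i r).2) r y := hyC.2
  obtain ⟨w, z, hrw, hwz, hw, hz⟩ := firstExit hreach hg hynot
  have hzC : z ∈ CC G v₀ i r := ⟨hwz.2.2, hrw.tail hwz⟩
  have hwd : w ∈ CC G v₀ i r \ {x | nbd G (u G v₀ i r) x} := CC_succ_subset G v₀ i r hw
  have hznbd : nbd G (u G v₀ i r) z := by
    by_contra h
    exact hz (comp_closed G hw ⟨hzC, h⟩ hwz.1)
  have hzne : u G v₀ i r ≠ z := by
    intro h
    exact hwd.2 (Or.inr (h ▸ hwz.1.symm))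
  exact ⟨z, hzC, hznbd.resolve_left hzne, w, hw, hwz.1.symm⟩

lemma A_nonempty (hconn : G.Connected) :
    ∀ (i : ℕ) {r : V}, r ∈ CC G v₀ (i+1) r → (A G v₀ i r).Nonempty := by
  intro i
  induction i with
  | zero =>
      intro r hg
      have hsub := CC_succ_subset G v₀ 0 r hg
      have hrnbd : ¬ nbd G v₀ r := hsub.2
      have hrne : r ≠ v₀ := fun h => hrnbd (Or.inl h.symm)
      -- find a neighbor y of v₀ with y ∈ CC 0 r
      have hreach : ReflTransGen G.Adj r v₀ := (reachable_iff_reflTransGen r v₀).1 (hconn r v₀)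
      rcases hreach.cases_tail with h | ⟨y, hry, hyv⟩
      · exact absurd h hrne.symm
      · -- y ∈ CC 0 r, Adj v₀ y
        have hyC : y ∈ CC G v₀ 0 r := by
          refine ⟨Set.mem_univ y, ReflTransGen.mono (fun a b hab => ?_) _ _ hry⟩
          exact ⟨hab, Set.mem_univ a, Set.mem_univ b⟩
        exact mainArg G v₀ hg ⟨y, hyC, hyv.symm⟩
  | succ l ih =>
      intro r hg
      have hg' : r ∈ CC G v₀ (l+1) r := CC_mono G v₀ (by omega) r hg
      have hu := u_mem_A G v₀ (ih hg')
      obtain ⟨-, -, y, hyC, hyadj⟩ := hu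
      exact mainArg G v₀ hg ⟨y, hyC, hyadj⟩


lemma St_stable {j : ℕ} {r r' : V} (hg : r ∈ CC G v₀ j r)
    (hrr' : r' = r ∨ G.Adj r r')
    (hav : ∀ i, i < j → ¬ nbd G (u G v₀ i r) r') :
    ∀ i, i ≤ j → St G v₀ i r' = St G v₀ i r ∧ r' ∈ CC G v₀ i r := by
  intro i
  induction i with
  | zero =>
      intro _
      refine ⟨rfl, Set.mem_univ r', ?_⟩
      rcases hrr' with h | h
      · rw [h]
      · exact ReflTransGen.single ⟨h, Set.mem_univ r, Set.mem_univ r'⟩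
  | succ l ih =>
      intro hl
      obtain ⟨hSt, hmem⟩ := ih (by omega)
      have h1 : u G v₀ l r' = u G v₀ l r := congrArg Prod.fst hSt
      have h2 : (St G v₀ l r').2 = (St G v₀ l r).2 := congrArg Prod.snd hSt
      have hCC : CC G v₀ l r' = CC G v₀ l r := by
        rw [CC, CC, h2]; exact comp_eq_of_mem G hmem
      have hrCl1 : r ∈ CC G v₀ (l+1) r := CC_mono G v₀ hl r hg
      have hr'amb : r' ∈ CC G v₀ l r \ {x | nbd G (u G v₀ l r) x} :=
        ⟨hmem, hav l (by omega)⟩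
      have hmem' : r' ∈ CC G v₀ (l+1) r := by
        rcases hrr' with h | h
        · rw [h]; exact hrCl1
        · rw [CC_succ]
          rw [CC_succ] at hrCl1
          exact comp_closed G hrCl1 hr'amb h
      have hCC1 : CC G v₀ (l+1) r' = CC G v₀ (l+1) r := by
        have hs' : (St G v₀ (l+1) r').2 = (St G v₀ (l+1) r).2 := by
          rw [St_succ_snd, St_succ_snd, hCC, h1]
        rw [CC, CC, hs']
        exact comp_eq_of_mem G hmem'
      have hSt' : St G v₀ (l+1) r' = St G v₀ (l+1) r := by
        have hfst : (St G v₀ (l+1) r').1 = (St G v₀ (l+1) r).1 := by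
          rw [St_succ_fst, St_succ_fst]
          have hA : A G v₀ l r' = A G v₀ l r := by
            rw [A, A, hCC, hCC1, h1]
          rw [hA]
        have hsnd : (St G v₀ (l+1) r').2 = (St G v₀ (l+1) r).2 := by
          rw [St_succ_snd, St_succ_snd, hCC, h1]
        exact Prod.ext hfst hsnd
      exact ⟨hSt', hmem'⟩

lemma exists_pathGraph_of_good (hconn : G.Connected) {n : ℕ} (hn : 1 ≤ n) {r : V}
    (hg : r ∈ CC G v₀ n r) : Nonempty (pathGraph (n+2) ↪g G) := by
  obtain ⟨d, rfl⟩ : ∃ d, n = d + 1 := ⟨n - 1, by omega⟩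
  have hGood : ∀ i, i ≤ d+1 → r ∈ CC G v₀ i r := fun i hi => CC_mono G v₀ hi r hg
  have hu : ∀ i, i + 1 ≤ d+1 → u G v₀ (i+1) r ∈ A G v₀ i r := fun i hi =>
    u_mem_A G v₀ (A_nonempty G v₀ hconn i (hGood (i+1) hi))
  obtain ⟨-, -, y, hyC, hyadj⟩ := hu d (le_refl _)
  set w : ℕ → V := fun i => if i ≤ d+1 then u G v₀ i r else y with hw
  have hwle : ∀ i, i ≤ d + 1 → w i = u G v₀ i r := fun i hi => by
    simp only [hw, if_pos hi]
  have hwy : w (d+2) = y := by simp [hw]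
  have hmemC : ∀ i, 1 ≤ i → i ≤ d+2 → w i ∈ CC G v₀ (i-1) r := by
    intro i h1 h2
    rcases Nat.lt_or_ge i (d+2) with h | h
    · obtain ⟨l, rfl⟩ : ∃ l, i = l + 1 := ⟨i - 1, by omega⟩
      rw [hwle _ (by omega)]
      simpa using (hu l (by omega)).1
    · have : i = d + 2 := by omega
      subst this
      simpa [hwy] using hyC
  have hadj : ∀ i, i + 1 ≤ d+2 → G.Adj (w i) (w (i+1)) := by
    intro i hi
    rcases Nat.lt_or_ge (i+1) (d+2) with h | h
    · rw [hwle i (by omega), hwle (i+1) (by omega)]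
      exact (hu i (by omega)).2.1
    · have : i = d + 1 := by omega
      subst this
      rw [hwle _ (le_refl _), hwy]
      exact hyadj
  have hnon : ∀ a b, a + 2 ≤ b → b ≤ d+2 → ¬ nbd G (w a) (w b) := by
    intro a b hab hb hn2
    have hwb : w b ∈ CC G v₀ (a+1) r := by
      have h1 : w b ∈ CC G v₀ (b-1) r := hmemC b (by omega) hb
      exact CC_mono G v₀ (by omega) r h1
    have := (CC_succ_subset G v₀ a r hwb).2
    rw [hwle a (by omega)] at hn2
    exact this hn2
  have hne : ∀ a b, a < b → b ≤ d + 2 → w a ≠ w b := by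
    intro a b hab hb
    rcases Nat.lt_or_ge (a+1) b with h | h
    · exact fun he => hnon a b (by omega) hb (Or.inl he)
    · have : b = a + 1 := by omega
      subst this
      exact (hadj a hb).ne
  refine ⟨⟨⟨fun i => w i.1, ?_⟩, ?_⟩⟩
  · intro a b hab
    simp only at hab
    rcases Nat.lt_trichotomy a.1 b.1 with h | h | h
    · exact absurd hab (hne a.1 b.1 h (by omega))
    · exact Fin.ext h
    · exact absurd hab.symm (hne b.1 a.1 h (by omega))
  · intro a b
    simp only [Function.Embedding.coeFn_mk, pathGraph_adj]
    constructor
    · intro h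
      by_contra hcon
      push_neg at hcon
      obtain ⟨hc1, hc2⟩ := hcon
      rcases Nat.lt_trichotomy a.1 b.1 with hlt | heq | hlt
      · exact hnon a.1 b.1 (by omega) (by omega) (Or.inr h)
      · exact G.irrefl (Fin.ext heq ▸ h)
      · exact hnon b.1 a.1 (by omega) (by omega) (Or.inr h.symm)
    · intro h
      rcases h with h | h
      · have := hadj a.1 (by omega)
        rwa [h] at this
      · have := hadj b.1 (by omega)
        rw [h] at this
        exact this.symm

section Walks

lemma getVert_injOn {a b : V} {p : G.Walk a b} (hp : p.IsPath) :
    ∀ m, m ≤ p.length → ∀ m', m' ≤ p.length → p.getVert m = p.getVert m' → m = m' := by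
  induction p with
  | nil =>
      intro m hm m' hm' _
      simp only [Walk.length_nil, Nat.le_zero] at hm hm'
      omega
  | @cons a c b hadj q ih =>
      rw [Walk.cons_isPath_iff] at hp
      intro m hm m' hm' h
      simp only [Walk.length_cons] at hm hm'
      match m, m' with
      | 0, 0 => rfl
      | 0, (l+1) =>
          exfalso
          apply hp.2
          rw [Walk.mem_support_iff_exists_getVert]
          refine ⟨l, ?_, by omega⟩
          rw [Walk.getVert_cons_succ] at h
          rw [← h, Walk.getVert_zero]
      | (l+1), 0 =>
          exfalso
          apply hp.2
          rw [Walk.mem_support_iff_exists_getVert]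
          refine ⟨l, ?_, by omega⟩
          rw [Walk.getVert_cons_succ] at h
          rw [h, Walk.getVert_zero]
      | (l+1), (l'+1) =>
          rw [Walk.getVert_cons_succ, Walk.getVert_cons_succ] at h
          have := ih hp.1 l (by omega) l' (by omega) h
          omega

variable (hconn : G.Connected)

/-- a canonical induced path between two vertices -/
noncomputable def cpath (a b : V) : G.Path a b :=
  letI := Classical.decEq V
  (Classical.choice (show Nonempty (G.Walk a b) from hconn.preconnected a b)).toPath

noncomputable def cwalk (a b : V) : G.Walk a b := (cpath G hconn a b : G.Walk a b)

lemma cwalk_isPath (a b : V) : (cwalk G hconn a b).IsPath := (cpath G hconn a b).isPath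

/-- transit walk for stage `j` -/
noncomputable def Wlk (j : ℕ) (r : V) : G.Walk (u G v₀ (j-1) r) (u G v₀ j r) :=
  cwalk G hconn (u G v₀ (j-1) r) (u G v₀ j r)

lemma Wlk_isPath (j : ℕ) (r : V) : (Wlk G v₀ hconn j r).IsPath := cwalk_isPath _ _ _ _

end Walks

section FS

attribute [local instance 2000] Classical.propDecidable

/-- The cop strategy. -/
noncomputable def Fstrat (hconn : G.Connected) (n : ℕ) (c : Fin n → V) (r : V) : Fin n → V :=
  if ∃ i, G.Adj (c i) r then fun i => if G.Adj (c i) r then r else c i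
  else
    if hj : Nat.findGreatest (fun j => ∀ i : Fin n, (i : ℕ) < j → c i = u G v₀ i r) n < n then
      if hm : ∃ m, m ≤ (Wlk G v₀ hconn (Nat.findGreatest (fun j => ∀ i : Fin n, (i : ℕ) < j → c i = u G v₀ i r) n) r).length ∧
          (Wlk G v₀ hconn (Nat.findGreatest (fun j => ∀ i : Fin n, (i : ℕ) < j → c i = u G v₀ i r) n) r).getVert m =
            c ⟨Nat.findGreatest (fun j => ∀ i : Fin n, (i : ℕ) < j → c i = u G v₀ i r) n, hj⟩ then
        if Nat.find hm < (Wlk G v₀ hconn (Nat.findGreatest (fun j => ∀ i : Fin n, (i : ℕ) < j → c i = u G v₀ i r) n) r).length then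
          fun i => if Nat.findGreatest (fun j => ∀ i : Fin n, (i : ℕ) < j → c i = u G v₀ i r) n ≤ (i : ℕ) ∧
              c i = c ⟨Nat.findGreatest (fun j => ∀ i : Fin n, (i : ℕ) < j → c i = u G v₀ i r) n, hj⟩ then
            (Wlk G v₀ hconn (Nat.findGreatest (fun j => ∀ i : Fin n, (i : ℕ) < j → c i = u G v₀ i r) n) r).getVert (Nat.find hm + 1)
          else c i
        else c
      else c
    else c

lemma Fstrat_legal (hconn : G.Connected) (n : ℕ) (c : Fin n → V) (r : V) (i : Fin n) :
    Fstrat G v₀ hconn n c r i = c i ∨ G.Adj (c i) (Fstrat G v₀ hconn n c r i) := by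
  unfold Fstrat
  by_cases h1 : ∃ i, G.Adj (c i) r
  · rw [if_pos h1]
    beta_reduce
    by_cases h2 : G.Adj (c i) r
    · rw [if_pos h2]; exact Or.inr h2
    · rw [if_neg h2]; exact Or.inl rfl
  · rw [if_neg h1]
    split_ifs with h2 h3 h4
    · beta_reduce
      split_ifs with h5
      · right
        obtain ⟨hle, hv⟩ := Nat.find_spec h3
        rw [h5.2]
        have hadj := (Wlk G v₀ hconn (Nat.findGreatest (fun j => ∀ i : Fin n, (i : ℕ) < j → c i = u G v₀ i r) n) r).adj_getVert_succ h4
        rw [hv] at hadj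
        exact hadj
      · left; rfl
    · left; rfl
    · left; rfl
    · left; rfl

lemma Fstrat_cap (hconn : G.Connected) (n : ℕ) {c : Fin n → V} {r : V} {i : Fin n}
    (h : G.Adj (c i) r) : Fstrat G v₀ hconn n c r i = r := by
  unfold Fstrat
  rw [if_pos ⟨i, h⟩]
  exact if_pos h


lemma Fstrat_step (hconn : G.Connected) (n : ℕ) {c : Fin n → V} {r : V} {j m : ℕ}
    (hnocap : ∀ i, ¬ nbd G (c i) r)
    (hjn : j < n)
    (hpref : ∀ i : Fin n, (i : ℕ) < j → c i = u G v₀ i r)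
    (hm : m < (Wlk G v₀ hconn j r).length)
    (htr : ∀ i : Fin n, j ≤ (i : ℕ) → c i = (Wlk G v₀ hconn j r).getVert m) :
    ∀ i : Fin n, Fstrat G v₀ hconn n c r i =
      if j ≤ (i : ℕ) then (Wlk G v₀ hconn j r).getVert (m+1) else c i := by
  have hnoadj : ¬ ∃ i, G.Adj (c i) r := fun ⟨i, h⟩ => hnocap i (Or.inr h)
  have hdec : Nat.findGreatest (fun j => ∀ i : Fin n, (i : ℕ) < j → c i = u G v₀ i r) n = j := by
    have hge : j ≤ Nat.findGreatest (fun j => ∀ i : Fin n, (i : ℕ) < j → c i = u G v₀ i r) n :=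
      Nat.le_findGreatest hjn.le hpref
    rcases Nat.lt_or_ge j (Nat.findGreatest (fun j => ∀ i : Fin n, (i : ℕ) < j → c i = u G v₀ i r) n) with hlt | hle
    · exfalso
      have hP := Nat.findGreatest_spec (P := fun j => ∀ i : Fin n, (i : ℕ) < j → c i = u G v₀ i r) hjn.le hpref
      have h1 : c ⟨j, hjn⟩ = u G v₀ j r := hP ⟨j, hjn⟩ hlt
      have h2 : c ⟨j, hjn⟩ = (Wlk G v₀ hconn j r).getVert m := htr ⟨j, hjn⟩ (le_refl j)
      have h3 : (Wlk G v₀ hconn j r).getVert ((Wlk G v₀ hconn j r).length) = u G v₀ j r :=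
        Walk.getVert_length _
      have := getVert_injOn G (Wlk_isPath G v₀ hconn j r) m hm.le
        ((Wlk G v₀ hconn j r).length) le_rfl (by rw [← h2, h1, h3])
      exact hm.ne this
    · exact le_antisymm hle hge
  intro i
  rw [← hdec] at hjn hpref hm htr ⊢
  unfold Fstrat
  set J := Nat.findGreatest (fun j => ∀ i : Fin n, (i : ℕ) < j → c i = u G v₀ i r) n with hJ
  rw [if_neg hnoadj]
  rw [dif_pos hjn]
  have hcj : c ⟨J, hjn⟩ = (Wlk G v₀ hconn J r).getVert m := htr ⟨J, hjn⟩ (le_refl J)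
  have hex : ∃ m', m' ≤ (Wlk G v₀ hconn J r).length ∧
      (Wlk G v₀ hconn J r).getVert m' = c ⟨J, hjn⟩ := ⟨m, hm.le, hcj.symm⟩
  rw [dif_pos hex]
  have hfind : Nat.find hex = m := by
    obtain ⟨hle, hv⟩ := Nat.find_spec hex
    exact getVert_injOn G (Wlk_isPath G v₀ hconn J r) _ hle m hm.le (by rw [hv, hcj])
  rw [if_pos (show Nat.find hex < (Wlk G v₀ hconn J r).length by rw [hfind]; exact hm)]
  beta_reduce
  by_cases hij : J ≤ (i : ℕ)
  · rw [if_pos ⟨hij, by rw [htr i hij, hcj]⟩, if_pos hij, hfind]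
  · rw [if_neg (fun h => hij h.1), if_neg hij]

end FS

section Game

variable [Fintype V] (hconn : G.Connected) (n : ℕ)
variable (rob : (Fin n → V) → V → V) (r₀ : V)

noncomputable def seqq : ℕ → (Fin n → V) × V :=
  copsRobberSeq (fun _ => v₀) (Fstrat G v₀ hconn n) rob r₀

def Capt (t : ℕ) : Prop :=
  (∃ i, (seqq G v₀ hconn n rob r₀ t).1 i = (seqq G v₀ hconn n rob r₀ t).2) ∨
  (∃ i, (seqq G v₀ hconn n rob r₀ (t+1)).1 i = (seqq G v₀ hconn n rob r₀ t).2)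

lemma seqq_succ_fst (t : ℕ) :
    (seqq G v₀ hconn n rob r₀ (t+1)).1 =
      Fstrat G v₀ hconn n (seqq G v₀ hconn n rob r₀ t).1 (seqq G v₀ hconn n rob r₀ t).2 := rfl

lemma seqq_succ_snd (t : ℕ) :
    (seqq G v₀ hconn n rob r₀ (t+1)).2 =
      rob ((seqq G v₀ hconn n rob r₀ (t+1)).1) (seqq G v₀ hconn n rob r₀ t).2 := rfl

lemma cap_of_nbd {t : ℕ}
    (h : ∃ i, nbd G ((seqq G v₀ hconn n rob r₀ t).1 i) ((seqq G v₀ hconn n rob r₀ t).2)) :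
    Capt G v₀ hconn n rob r₀ t := by
  obtain ⟨i, h⟩ := h
  rcases h with h | h
  · exact Or.inl ⟨i, h⟩
  · refine Or.inr ⟨i, ?_⟩
    rw [seqq_succ_fst]
    exact Fstrat_cap G v₀ hconn n h

lemma cwalk_congr {a b a' b' : V} (ha : a' = a) (hb : b' = b) :
    cwalk G hconn a' b' = (cwalk G hconn a b).copy ha.symm hb.symm := by
  subst ha; subst hb; rw [Walk.copy_rfl_rfl]

lemma Wlk_stable {j : ℕ} {r r' : V} (h1 : u G v₀ (j-1) r' = u G v₀ (j-1) r)
    (h2 : u G v₀ j r' = u G v₀ j r) :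
    (∀ m, (Wlk G v₀ hconn j r').getVert m = (Wlk G v₀ hconn j r).getVert m) ∧
      (Wlk G v₀ hconn j r').length = (Wlk G v₀ hconn j r).length := by
  have hW : Wlk G v₀ hconn j r' = (Wlk G v₀ hconn j r).copy h1.symm h2.symm :=
    cwalk_congr G hconn h1 h2
  constructor
  · intro m; rw [hW, Walk.getVert_copy]
  · rw [hW, Walk.length_copy]

lemma capture_from (hrob : ∀ c r, rob c r = r ∨ G.Adj r (rob c r))
    (noGood : ∀ x : V, x ∉ CC G v₀ n x) :
    ∀ μ t j m,
      1 ≤ j → j < n →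
      (∀ i : Fin n, (i : ℕ) < j →
        (seqq G v₀ hconn n rob r₀ t).1 i = u G v₀ i ((seqq G v₀ hconn n rob r₀ t).2)) →
      ((seqq G v₀ hconn n rob r₀ t).2 ∈ CC G v₀ j ((seqq G v₀ hconn n rob r₀ t).2)) →
      m < (Wlk G v₀ hconn j ((seqq G v₀ hconn n rob r₀ t).2)).length →
      (∀ i : Fin n, j ≤ (i : ℕ) →
        (seqq G v₀ hconn n rob r₀ t).1 i = (Wlk G v₀ hconn j ((seqq G v₀ hconn n rob r₀ t).2)).getVert m) →
      (n - j) * Fintype.card V + (Fintype.card V - m) ≤ μ →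
      ∃ t', Capt G v₀ hconn n rob r₀ t' := by
  intro μ
  induction μ using Nat.strong_induction_on with
  | _ μ ih =>
  intro t j m hj1 hjn hpref hgood hm htr hμ
  by_cases hcap : ∃ i, nbd G ((seqq G v₀ hconn n rob r₀ t).1 i) ((seqq G v₀ hconn n rob r₀ t).2)
  · exact ⟨t, cap_of_nbd G v₀ hconn n rob r₀ hcap⟩
  have hnocap : ∀ i, ¬ nbd G ((seqq G v₀ hconn n rob r₀ t).1 i) ((seqq G v₀ hconn n rob r₀ t).2) := fun i h => hcap ⟨i, h⟩
  have hF := Fstrat_step G v₀ hconn n hnocap hjn hpref hm htr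
  have hrr' : (seqq G v₀ hconn n rob r₀ (t+1)).2 = (seqq G v₀ hconn n rob r₀ t).2 ∨ G.Adj ((seqq G v₀ hconn n rob r₀ t).2) ((seqq G v₀ hconn n rob r₀ (t+1)).2) := by
    rw [seqq_succ_snd]
    exact hrob _ _
  by_cases hcap' : ∃ i, nbd G ((seqq G v₀ hconn n rob r₀ (t+1)).1 i) ((seqq G v₀ hconn n rob r₀ (t+1)).2)
  · exact ⟨t+1, cap_of_nbd G v₀ hconn n rob r₀ hcap'⟩
  have hnocap' : ∀ i, ¬ nbd G ((seqq G v₀ hconn n rob r₀ (t+1)).1 i) ((seqq G v₀ hconn n rob r₀ (t+1)).2) := fun i h => hcap' ⟨i, h⟩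
  have hmN : m < Fintype.card V :=
    lt_trans hm (Wlk_isPath G v₀ hconn j ((seqq G v₀ hconn n rob r₀ t).2)).length_lt
  have hav : ∀ i, i < j → ¬ nbd G (u G v₀ i ((seqq G v₀ hconn n rob r₀ t).2)) ((seqq G v₀ hconn n rob r₀ (t+1)).2) := by
    intro i hij
    have hin : i < n := lt_trans hij hjn
    have h := hnocap' ⟨i, hin⟩
    rw [seqq_succ_fst, hF ⟨i, hin⟩, if_neg (show ¬ (j ≤ ((⟨i, hin⟩ : Fin n) : ℕ)) from Nat.not_le.2 hij),
      hpref ⟨i, hin⟩ hij] at h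
    exact h
  have hstab := St_stable G v₀ hgood hrr' hav
  have hu_eq : ∀ i, i ≤ j → u G v₀ i ((seqq G v₀ hconn n rob r₀ (t+1)).2) = u G v₀ i ((seqq G v₀ hconn n rob r₀ t).2) := fun i hi =>
    congrArg Prod.fst ((hstab i hi).1)
  have hr'CCj : (seqq G v₀ hconn n rob r₀ (t+1)).2 ∈ CC G v₀ j ((seqq G v₀ hconn n rob r₀ t).2) := (hstab j le_rfl).2
  have hCCj : CC G v₀ j ((seqq G v₀ hconn n rob r₀ (t+1)).2) = CC G v₀ j ((seqq G v₀ hconn n rob r₀ t).2) := by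
    rw [CC, CC, (hstab j le_rfl).1]
    exact comp_eq_of_mem G hr'CCj
  rcases Nat.lt_or_ge (m+1) ((Wlk G v₀ hconn j ((seqq G v₀ hconn n rob r₀ t).2)).length) with hml | hml
  · -- transit continues
    have hWst := Wlk_stable G v₀ hconn (hu_eq (j-1) (by omega)) (hu_eq j le_rfl)
    have harith : (n - j) * Fintype.card V + (Fintype.card V - (m+1)) < μ := by
      set K := (n - j) * Fintype.card V
      omega
    refine ih ((n - j) * Fintype.card V + (Fintype.card V - (m+1))) harith (t+1) j (m+1)
      hj1 hjn ?_ ?_ ?_ ?_ le_rfl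
    · intro i hij
      rw [seqq_succ_fst, hF i, if_neg (Nat.not_le.2 hij), hpref i hij]
      exact (hu_eq i hij.le).symm
    · rw [hCCj]; exact hr'CCj
    · rw [hWst.2]; exact hml
    · intro i hij
      rw [seqq_succ_fst, hF i, if_pos hij]
      exact (hWst.1 (m+1)).symm
  · -- arrival
    have hml' : m + 1 = (Wlk G v₀ hconn j ((seqq G v₀ hconn n rob r₀ t).2)).length := by omega
    have hposj : ∀ i : Fin n, j ≤ (i : ℕ) →
        (seqq G v₀ hconn n rob r₀ (t+1)).1 i = u G v₀ j ((seqq G v₀ hconn n rob r₀ t).2) := by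
      intro i hij
      rw [seqq_succ_fst, hF i, if_pos hij, hml', Walk.getVert_length]
    have havj : ¬ nbd G (u G v₀ j ((seqq G v₀ hconn n rob r₀ t).2)) ((seqq G v₀ hconn n rob r₀ (t+1)).2) := by
      have h := hnocap' ⟨j, hjn⟩
      rwa [hposj ⟨j, hjn⟩ le_rfl] at h
    have hgood' : (seqq G v₀ hconn n rob r₀ (t+1)).2 ∈ CC G v₀ (j+1) ((seqq G v₀ hconn n rob r₀ (t+1)).2) := by
      rw [CC_succ]
      apply mem_comp_self
      refine ⟨?_, ?_⟩
      · rw [hCCj]; exact hr'CCj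
      · intro h
        rw [hu_eq j le_rfl] at h
        exact havj h
    rcases Nat.lt_or_ge (j+1) n with hj1n | hj1n
    · -- continue with new stage
      have hA := A_nonempty G v₀ hconn j hgood'
      have huA := u_mem_A G v₀ hA
      have hne : u G v₀ j ((seqq G v₀ hconn n rob r₀ (t+1)).2) ≠ u G v₀ (j+1) ((seqq G v₀ hconn n rob r₀ (t+1)).2) := huA.2.1.ne
      have hlen0 : 0 < (Wlk G v₀ hconn (j+1) ((seqq G v₀ hconn n rob r₀ (t+1)).2)).length := by
        rcases Nat.eq_zero_or_pos (Wlk G v₀ hconn (j+1) ((seqq G v₀ hconn n rob r₀ (t+1)).2)).length with h | h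
        · exact absurd (Walk.eq_of_length_eq_zero h) hne
        · exact h
      have harith : (n - (j+1)) * Fintype.card V + Fintype.card V < μ := by
        have h9 : (n - j) = (n - (j+1)) + 1 := by omega
        have h10 : (n - (j+1)) * Fintype.card V + Fintype.card V
            = (n - j) * Fintype.card V := by rw [h9, add_mul, one_mul]
        rw [h10]
        set K := (n - j) * Fintype.card V
        omega
      refine ih ((n - (j+1)) * Fintype.card V + Fintype.card V) harith (t+1) (j+1) 0
        (by omega) hj1n ?_ hgood' ?_ ?_ (by simp)
      · intro i hij
        rcases Nat.lt_or_ge (i : ℕ) j with h | h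
        · rw [seqq_succ_fst, hF i, if_neg (Nat.not_le.2 h), hpref i h]
          exact (hu_eq i h.le).symm
        · have hij' : (i : ℕ) = j := by omega
          rw [hposj i h, hij']
          exact (hu_eq j le_rfl).symm
      · exact hlen0
      · intro i hij
        rw [hposj i (by omega), Walk.getVert_zero]
        exact (hu_eq j le_rfl).symm
    · exfalso
      have hjeq : j + 1 = n := by omega
      exact noGood ((seqq G v₀ hconn n rob r₀ (t+1)).2) (hjeq ▸ hgood')

lemma capture_exists (hrob : ∀ c r, rob c r = r ∨ G.Adj r (rob c r))
    (noGood : ∀ x : V, x ∉ CC G v₀ n x) (hn1 : 1 ≤ n) :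
    ∃ t, Capt G v₀ hconn n rob r₀ t := by
  by_cases hcap : ∃ i, nbd G ((seqq G v₀ hconn n rob r₀ 0).1 i) ((seqq G v₀ hconn n rob r₀ 0).2)
  · exact ⟨0, cap_of_nbd G v₀ hconn n rob r₀ hcap⟩
  have hr0 : ¬ nbd G v₀ r₀ := fun h => hcap ⟨⟨0, hn1⟩, h⟩
  have hgood1 : r₀ ∈ CC G v₀ 1 r₀ := by
    rw [CC_succ]
    apply mem_comp_self
    exact ⟨mem_comp_self G (Set.mem_univ r₀), hr0⟩
  rcases Nat.lt_or_ge 1 n with h1n | h1n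
  · have hA := A_nonempty G v₀ hconn 0 hgood1
    have huA := u_mem_A G v₀ hA
    have hne : u G v₀ 0 r₀ ≠ u G v₀ 1 r₀ := huA.2.1.ne
    have hlen0 : 0 < (Wlk G v₀ hconn 1 r₀).length := by
      rcases Nat.eq_zero_or_pos (Wlk G v₀ hconn 1 r₀).length with h | h
      · exact absurd (Walk.eq_of_length_eq_zero h) hne
      · exact h
    refine capture_from G v₀ hconn n rob r₀ hrob noGood
      ((n - 1) * Fintype.card V + Fintype.card V) 0 1 0 le_rfl h1n ?_ hgood1 hlen0 ?_ (by simp)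
    · intro i hij
      have : (i : ℕ) = 0 := by omega
      rw [this]
      rfl
    · intro i _
      exact (Walk.getVert_zero _).symm
  · exfalso
    have : (1 : ℕ) = n := by omega
    exact noGood r₀ (this ▸ hgood1)

end Game

theorem copWinWith_of_noGood [Fintype V] (hconn : G.Connected) (n : ℕ) (hn1 : 1 ≤ n)
    (noGood : ∀ x : V, x ∉ CC G v₀ n x) : CopWinWith G n := by
  refine ⟨fun _ => v₀, Fstrat G v₀ hconn n, Fstrat_legal G v₀ hconn n, ?_⟩
  intro r₀ rob hrob
  exact capture_exists G v₀ hconn n rob r₀ hrob noGood hn1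

end CopsAux

theorem cop_number_of_pathFree {V : Type*} [Fintype V] (G : SimpleGraph V) (k : ℕ)
    (hk : 3 ≤ k) (hconn : G.Connected)
    (hfree : IsEmpty (pathGraph k ↪g G)) :
    copNumber G ≤ k - 2 := by
  have hV : Nonempty V := hconn.nonempty
  set v₀ := Classical.arbitrary V with hv₀
  set n := k - 2 with hn
  have hn1 : 1 ≤ n := by omega
  have hk2 : n + 2 = k := by omega
  have noGood : ∀ x : V, x ∉ CopsAux.CC G v₀ n x := by
    intro x hx
    have := CopsAux.exists_pathGraph_of_good G v₀ hconn hn1 hx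
    rw [hk2] at this
    exact hfree.false this.some
  have hwin : CopWinWith G n := CopsAux.copWinWith_of_noGood G v₀ hconn n hn1 noGood
  exact Nat.sInf_le hwin
end

section
/- For every integer k ≥ 5, if a finite connected graph G contains no induced path on k vertices and no induced copy of the claw K_{1,3}, then the cop number of G is at most k − 3. -/
open SimpleGraph

namespace CRGame

open Classical

variable {V : Type*} (G : SimpleGraph V) {n : ℕ}

/-- Some cop is on the robber or adjacent to it (so cops to move can capture). -/
def Catch (c : Fin n → V) (r : V) : Prop := ∃ i, c i = r ∨ G.Adj (c i) r

/-- Cops (to move) can guarantee capture within `j` rounds. -/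
def WinN : ℕ → (Fin n → V) → V → Prop
  | 0, c, r => Catch G c r
  | (j+1), c, r => Catch G c r ∨
      ∃ c', (∀ i, c' i = c i ∨ G.Adj (c i) (c' i)) ∧
        ∀ r', (r' = r ∨ G.Adj r r') → WinN j c' r'

def Win (c : Fin n → V) (r : V) : Prop := ∃ j, WinN G j c r

variable {G}

lemma winN_succ_of_winN {j : ℕ} {c : Fin n → V} {r : V} (h : WinN G j c r) :
    WinN G (j+1) c r := by
  induction j generalizing c r with
  | zero => exact Or.inl h
  | succ j ih =>
    rcases h with h | ⟨c', hm, hr⟩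
    · exact Or.inl h
    · exact Or.inr ⟨c', hm, fun r' hr' => ih (hr r' hr')⟩

lemma winN_mono {j j' : ℕ} (hj : j ≤ j') {c : Fin n → V} {r : V} (h : WinN G j c r) :
    WinN G j' c r := by
  induction j' with
  | zero => cases Nat.le_zero.mp hj; exact h
  | succ j' ih =>
    rcases Nat.lt_or_ge j (j'+1) with hlt | hge
    · exact winN_succ_of_winN (ih (Nat.lt_succ_iff.mp hlt))
    · cases le_antisymm hj hge; exact h

lemma win_catch {c : Fin n → V} {r : V} (h : Catch G c r) : Win G c r := ⟨0, h⟩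

lemma win_step [Fintype V] {c c' : Fin n → V} {r : V}
    (hm : ∀ i, c' i = c i ∨ G.Adj (c i) (c' i))
    (hr : ∀ r', (r' = r ∨ G.Adj r r') → Win G c' r') : Win G c r := by
  classical
  have hfind : ∀ r', ∀ h : (r' = r ∨ G.Adj r r'), WinN G (Nat.find (hr r' h)) c' r' :=
    fun r' h => Nat.find_spec (hr r' h)
  set f : V → ℕ := fun r' => if h : (r' = r ∨ G.Adj r r') then Nat.find (hr r' h) else 0 with hf
  refine ⟨(Finset.univ.sup f) + 1, Or.inr ⟨c', hm, fun r' h => ?_⟩⟩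
  refine winN_mono ?_ (hfind r' h)
  have : f r' = Nat.find (hr r' h) := by simp [hf, h]
  rw [← this]
  exact Finset.le_sup (Finset.mem_univ r')

/-- Extract a rank-decreasing move. -/
lemma win_extract {c : Fin n → V} {r : V} (hW : ∃ j, WinN G j c r) (hnc : ¬ Catch G c r) :
    ∃ c', (∀ i, c' i = c i ∨ G.Adj (c i) (c' i)) ∧
      ∀ r', (r' = r ∨ G.Adj r r') → WinN G (Nat.find hW - 1) c' r' := by
  have hspec := Nat.find_spec hW
  rcases hj : Nat.find hW with _ | j
  · rw [hj] at hspec; exact absurd hspec hnc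
  · rw [hj] at hspec
    rcases hspec with h | ⟨c', hm, hr⟩
    · exact absurd h hnc
    · exact ⟨c', hm, fun r' h => by simpa using hr r' h⟩

/-- From a winning initial configuration we get a full winning strategy. -/
theorem copWinWith_of_win [Fintype V] (init : Fin n → V) (hwin : ∀ r, Win G init r) :
    CopWinWith G n := by
  classical
  -- strategy
  set F : (Fin n → V) → V → (Fin n → V) := fun c r =>
    if h : Catch G c r then Function.update c h.choose r
    else if hW : ∃ j, WinN G j c r then (win_extract hW h).choose
    else c with hF
  refine ⟨init, F, ?_, ?_⟩
  · intro c r i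
    by_cases h : Catch G c r
    · rcases eq_or_ne i h.choose with rfl | hne
      · rcases h.choose_spec with h1 | h1
        · left; rw [hF]; simp [h, Function.update_self, h1]
        · right; rw [hF]; simpa [h, Function.update_self] using h1
      · left; rw [hF]; simp [h, Function.update_of_ne hne]
    · by_cases hW : ∃ j, WinN G j c r
      · rw [hF]; simpa [h, hW] using (win_extract hW h).choose_spec.1 i
      · left; rw [hF]; simp [h, hW]
  · intro r₀ rob hrob
    -- main descent
    set play := copsRobberSeq init F rob r₀ with hplay
    have hstep : ∀ t, play (t+1) = (F (play t).1 (play t).2, rob (F (play t).1 (play t).2) (play t).2) := by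
      intro t; rfl
    have key : ∀ (M : ℕ) (t : ℕ) (hW : ∃ j, WinN G j (play t).1 (play t).2), Nat.find hW ≤ M →
        ∃ t', (∃ i, (play t').1 i = (play t').2) ∨ (∃ i, (play (t'+1)).1 i = (play t').2) := by
      intro M
      induction M using Nat.strong_induction_on with
      | _ M IH =>
        intro t hW hle
        by_cases hc : Catch G (play t).1 (play t).2
        · refine ⟨t, Or.inr ⟨hc.choose, ?_⟩⟩
          rw [hstep t]
          simp only [hF]
          rw [dif_pos hc]
          simp [Function.update_self]
        · have hFval : F (play t).1 (play t).2 = (win_extract hW hc).choose := by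
            rw [hF]; simp [hc, hW]
          have hspec := (win_extract hW hc).choose_spec.2
          have hrm : rob (F (play t).1 (play t).2) (play t).2 = (play t).2 ∨
              G.Adj (play t).2 (rob (F (play t).1 (play t).2) (play t).2) :=
            hrob _ _
          have hw' : WinN G (Nat.find hW - 1) (play (t+1)).1 (play (t+1)).2 := by
            rw [hstep t]
            simp only []
            rw [hFval]
            exact hspec _ (by rw [← hFval]; exact hrm)
          have hne0 : Nat.find hW ≠ 0 := by
            intro h0
            have := Nat.find_spec hW
            rw [h0] at this
            exact hc this
          have hW' : ∃ j, WinN G j (play (t+1)).1 (play (t+1)).2 := ⟨_, hw'⟩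
          have hlt : Nat.find hW' < M := by
            have h1 : Nat.find hW' ≤ Nat.find hW - 1 := Nat.find_le hw'
            omega
          exact IH (Nat.find hW') hlt (t+1) hW' le_rfl
    have hW0 : ∃ j, WinN G j (play 0).1 (play 0).2 := hwin r₀
    exact key (Nat.find hW0) 0 hW0 le_rfl


variable {V : Type*} (G : SimpleGraph V)

/-- Reachability within a set `S`. -/
inductive ReachIn (S : Set V) (x : V) : V → Prop
  | refl (hx : x ∈ S) : ReachIn S x x
  | tail {y z : V} (h : ReachIn S x y) (ha : G.Adj y z) (hz : z ∈ S) : ReachIn S x z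

variable {G}

namespace ReachIn

lemma mem_right {S : Set V} {x y : V} (h : ReachIn G S x y) : y ∈ S := by
  cases h with
  | refl hx => exact hx
  | tail _ _ hz => exact hz

lemma mem_left {S : Set V} {x y : V} (h : ReachIn G S x y) : x ∈ S := by
  induction h with
  | refl hx => exact hx
  | tail _ _ _ ih => exact ih

lemma trans {S : Set V} {x y z : V} (h1 : ReachIn G S x y) (h2 : ReachIn G S y z) :
    ReachIn G S x z := by
  induction h2 with
  | refl _ => exact h1
  | tail _ ha hz ih => exact ih.tail ha hz

lemma symm {S : Set V} {x y : V} (h : ReachIn G S x y) : ReachIn G S y x := by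
  induction h with
  | refl hx => exact refl hx
  | tail h ha hz ih =>
    exact ReachIn.trans ((ReachIn.refl hz).tail ha.symm h.mem_right) ih

lemma head {S : Set V} {x y z : V} (hx : x ∈ S) (ha : G.Adj x y) (h : ReachIn G S y z) :
    ReachIn G S x z :=
  ReachIn.trans ((ReachIn.refl hx).tail ha h.mem_left) h

lemma restrict {S : Set V} {x y : V} (h : ReachIn G S x y) :
    ReachIn G {z | ReachIn G S x z} x y := by
  induction h with
  | refl hx => exact refl (ReachIn.refl hx)
  | tail h ha hz ih => exact ih.tail ha (h.tail ha hz)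

end ReachIn

/-- Any two vertices of a reach-component are connected inside the component. -/
lemma reach_pairwise {S : Set V} {r x y : V}
    (hx : ReachIn G S r x) (hy : ReachIn G S r y) :
    ReachIn G {z | ReachIn G S r z} x y :=
  ReachIn.trans hx.restrict.symm hy.restrict

/-- Crossing lemma. -/
lemma cross {S C : Set V} {r : V} (hrS : r ∈ S) :
    ∀ {v : V}, ReachIn G C r v → ¬ ReachIn G S r v →
    ∃ x b, ReachIn G S r x ∧ b ∈ C ∧ b ∉ S ∧ G.Adj x b := by
  intro v hv
  induction hv with
  | refl _ => exact fun hv => absurd (ReachIn.refl hrS) hv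
  | tail h ha hz ih =>
    rename_i y z
    intro hzD
    by_cases hyD : ReachIn G S r y
    · have hzS : z ∉ S := fun hzS => hzD (hyD.tail ha hzS)
      exact ⟨y, z, hyD, hz, hzS, ha⟩
    · exact ih hyD

/-- Walks give reachability in `univ`. -/
lemma walk_reachIn {u v : V} (w : G.Walk u v) : ReachIn G Set.univ u v := by
  induction w with
  | nil => exact ReachIn.refl (Set.mem_univ _)
  | cons ha _ ih => exact ReachIn.head (Set.mem_univ _) ha ih

section Path

/-- An induced path given as a vertex function. -/
def IsIndPath (G : SimpleGraph V) {M : ℕ} (f : Fin M → V) : Prop :=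
  Function.Injective f ∧
    ∀ i j, G.Adj (f i) (f j) ↔ ((i : ℕ) + 1 = (j : ℕ) ∨ (j : ℕ) + 1 = (i : ℕ))

/-- Extend a path function by one more vertex at the end. -/
def extendPath {M : ℕ} (f : Fin M → V) (v : V) : Fin (M+1) → V :=
  fun i => if h : (i : ℕ) < M then f ⟨i, h⟩ else v

lemma extendPath_lt {M : ℕ} {f : Fin M → V} {v : V} {i : Fin (M+1)} (h : (i : ℕ) < M) :
    extendPath f v i = f ⟨i, h⟩ := dif_pos h

lemma extendPath_last {M : ℕ} {f : Fin M → V} {v : V} {i : Fin (M+1)} (h : ¬ (i : ℕ) < M) :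
    extendPath f v i = v := dif_neg h

lemma isIndPath_extend {M : ℕ} {f : Fin M → V} {v : V} (hf : IsIndPath G f) (hM : 1 ≤ M)
    (hadj : G.Adj (f ⟨M-1, by omega⟩) v)
    (hold : ∀ i : Fin M, (i : ℕ) < M - 1 → ¬ G.Adj (f i) v)
    (hne : ∀ i, f i ≠ v) :
    IsIndPath G (extendPath f v) := by
  constructor
  · intro i j hij
    by_cases hi : (i : ℕ) < M <;> by_cases hj : (j : ℕ) < M
    · rw [extendPath_lt hi, extendPath_lt hj] at hij
      have h2 : ((⟨(i:ℕ), hi⟩ : Fin M) : ℕ) = ((⟨(j:ℕ), hj⟩ : Fin M) : ℕ) :=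
        congrArg Fin.val (hf.1 hij)
      exact Fin.ext (by simpa using h2)
    · rw [extendPath_lt hi, extendPath_last hj] at hij
      exact absurd hij (hne _)
    · rw [extendPath_last hi, extendPath_lt hj] at hij
      exact absurd hij.symm (hne _)
    · exact Fin.ext (by omega)
  · intro i j
    by_cases hi : (i : ℕ) < M <;> by_cases hj : (j : ℕ) < M
    · rw [extendPath_lt hi, extendPath_lt hj]
      exact hf.2 ⟨i, hi⟩ ⟨j, hj⟩
    · rw [extendPath_lt hi, extendPath_last hj]
      have hjM : (j : ℕ) = M := by omega
      constructor
      · intro had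
        left
        by_contra hne1
        refine hold ⟨i, hi⟩ ?_ had
        show (i : ℕ) < M - 1
        omega
      · intro hor
        have hiv : (⟨(i:ℕ), hi⟩ : Fin M) = ⟨M-1, by omega⟩ := Fin.mk_eq_mk.mpr (by omega)
        rw [hiv]; exact hadj
    · rw [extendPath_last hi, extendPath_lt hj]
      have hiM : (i : ℕ) = M := by omega
      rw [G.adj_comm]
      constructor
      · intro had
        right
        by_contra hne1
        refine hold ⟨j, hj⟩ ?_ had
        show (j : ℕ) < M - 1
        omega
      · intro hor
        have hjv : (⟨(j:ℕ), hj⟩ : Fin M) = ⟨M-1, by omega⟩ := Fin.mk_eq_mk.mpr (by omega)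
        rw [hjv]; exact hadj
    · rw [extendPath_last hi, extendPath_last hj]
      have h1 : (i : ℕ) = M := by omega
      have h2 : (j : ℕ) = M := by omega
      constructor
      · intro had; exact absurd had (G.irrefl)
      · intro hor; omega

end Path

section Forbidden

variable {k : ℕ}

/-- No induced path on `k` vertices. -/
lemma no_long_path (hPfree : IsEmpty (pathGraph k ↪g G)) {M : ℕ} (f : Fin M → V)
    (hf : IsIndPath G f) : M < k := by
  by_contra hMk
  push_neg at hMk
  refine hPfree.false ?_
  refine ⟨⟨fun i => f (Fin.castLE hMk i), fun i j hij => ?_⟩, ?_⟩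
  · have h2 : ((Fin.castLE hMk i) : ℕ) = ((Fin.castLE hMk j) : ℕ) :=
      congrArg Fin.val (hf.1 hij)
    exact Fin.ext (by simpa using h2)
  · intro a b
    show G.Adj (f (Fin.castLE hMk a)) (f (Fin.castLE hMk b)) ↔ _
    rw [hf.2, pathGraph_adj]
    simp

/-- Claw-freeness in usable form. -/
lemma no_claw (hclawfree : IsEmpty (completeBipartiteGraph (Fin 1) (Fin 3) ↪g G))
    {x a b c : V} (hxa : G.Adj x a) (hxb : G.Adj x b) (hxc : G.Adj x c)
    (hab : ¬ G.Adj a b) (hac : ¬ G.Adj a c) (hbc : ¬ G.Adj b c)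
    (hab' : a ≠ b) (hac' : a ≠ c) (hbc' : b ≠ c) : False := by
  refine hclawfree.false ?_
  have hxa' := G.ne_of_adj hxa
  have hxb' := G.ne_of_adj hxb
  have hxc' := G.ne_of_adj hxc
  refine ⟨⟨Sum.elim (fun _ => x) (![a, b, c]), ?_⟩, ?_⟩
  · intro u v huv
    rcases u with u | u <;> rcases v with v | v
    · exact congrArg Sum.inl (Subsingleton.elim u v)
    · exfalso
      simp only [Sum.elim_inl, Sum.elim_inr] at huv
      fin_cases v <;> simp_all
    · exfalso
      simp only [Sum.elim_inl, Sum.elim_inr] at huv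
      fin_cases u <;> simp_all
    · refine congrArg Sum.inr ?_
      by_contra hne
      fin_cases u <;> fin_cases v <;> simp_all
  · intro u v
    show G.Adj (Sum.elim (fun _ => x) (![a, b, c]) u) (Sum.elim (fun _ => x) (![a, b, c]) v) ↔ _
    rcases u with u | u <;> rcases v with v | v <;>
      simp only [Sum.elim_inl, Sum.elim_inr, completeBipartiteGraph_adj, Sum.isLeft_inl,
        Sum.isRight_inl, Sum.isLeft_inr, Sum.isRight_inr]
    · simp
    · fin_cases v <;> simp [hxa, hxb, hxc]
    · fin_cases u <;> simp [hxa.symm, hxb.symm, hxc.symm]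
    · have hba : ¬ G.Adj b a := fun h => hab h.symm
      have hca : ¬ G.Adj c a := fun h => hac h.symm
      have hcb : ¬ G.Adj c b := fun h => hbc h.symm
      fin_cases u <;> fin_cases v <;> simp [hab, hac, hbc, hba, hca, hcb]

end Forbidden
theorem main_lemma {V : Type*} [Fintype V] {G : SimpleGraph V} {k : ℕ} (hk : 5 ≤ k)
    (hconn : G.Connected)
    (hPfree : IsEmpty (pathGraph k ↪g G))
    (hclawfree : IsEmpty (completeBipartiteGraph (Fin 1) (Fin 3) ↪g G)) :
    ∀ (N : ℕ) (m : ℕ) (hm : m + 4 ≤ k) (hm1 : 1 ≤ m)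
    (p : Fin m → V) (hp : IsIndPath G p)
    (C : Set V) (hcard : C.ncard ≤ N)
    (h2 : ∀ x ∈ C, ∀ i : Fin m, x ≠ p i ∧ ¬ G.Adj (p i) x)
    (h3 : ∀ x ∈ C, ∀ y : V, G.Adj x y → y ∈ C ∨ ∃ i : Fin m, y = p i ∨ G.Adj (p i) y)
    (h4 : ∀ x ∈ C, ∀ y ∈ C, ReachIn G C x y)
    (w : V) (hwadj : G.Adj (p ⟨m-1, by omega⟩) w)
    (hwold : ∀ i : Fin m, (i : ℕ) < m - 1 → ¬ G.Adj (p i) w ∧ p i ≠ w)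
    (ha : ∃ a ∈ C, G.Adj w a)
    (cops : Fin (k-3) → V) (hcops : ∀ (i : Fin (k-3)) (h : (i : ℕ) < m), cops i = p ⟨i, h⟩)
    (r : V) (hr : r ∈ C), Win G cops r := by
  intro N
  induction N using Nat.strong_induction_on with
  | _ N IH =>
  intro m hm hm1 p hp C hcard h2 h3 h4 w hwadj hwold ha cops hcops r hr
  obtain ⟨a, haC, hwa⟩ := ha
  classical
  have hmlt : m < k - 3 := by omega
  have hm1' : m - 1 < m := by omega
  set j₀ : Fin (k-3) := ⟨m, hmlt⟩ with hj₀
  have hj₀v : (j₀ : ℕ) = m := rfl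
  have hwC : w ∉ C := fun hwC => (h2 w hwC ⟨m-1, hm1'⟩).2 hwadj
  -- catching in the guarded zone
  have catch_zone : ∀ (cops'' : Fin (k-3) → V),
      (∀ (i : Fin (k-3)) (h : (i : ℕ) < m), cops'' i = p ⟨i, h⟩) →
      ∀ r'', (∃ i : Fin m, r'' = p i ∨ G.Adj (p i) r'') → Catch G cops'' r'' := by
    intro cops'' hst r'' hex
    obtain ⟨i, hi⟩ := hex
    have hik : (i : ℕ) < k - 3 := by omega
    refine ⟨⟨i, hik⟩, ?_⟩
    have heq : cops'' ⟨(i : ℕ), hik⟩ = p i := by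
      rw [hst ⟨(i : ℕ), hik⟩ i.isLt]
    rcases hi with h | h
    · exact Or.inl (by rw [heq, h])
    · exact Or.inr (by rw [heq]; exact h)
  -- The key step once the free cop has arrived at the witness w.
  have ATW : ∀ (cops' : Fin (k-3) → V),
      (∀ (i : Fin (k-3)) (h : (i : ℕ) < m), cops' i = p ⟨i, h⟩) → cops' j₀ = w →
      ∀ r' ∈ C, Win G cops' r' := by
    intro cops' hst hjw r' hr'
    by_cases hrw : r' = w ∨ G.Adj w r'
    · refine win_catch ⟨j₀, ?_⟩
      rw [hjw]
      rcases hrw with h | h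
      · exact Or.inl h.symm
      · exact Or.inr h
    · -- robber is in its chunk D of C \ N[w]
      set S : Set V := {z | z ∈ C ∧ ¬(z = w ∨ G.Adj w z)} with hS
      have hr'S : r' ∈ S := ⟨hr', hrw⟩
      set D : Set V := {z | ReachIn G S r' z} with hD
      have hrD : r' ∈ D := ReachIn.refl hr'S
      have hDsub : ∀ z ∈ D, z ∈ S := fun z hz => hz.mem_right
      have haD : a ∉ D := fun hmem => (hDsub a hmem).2 (Or.inr hwa)
      obtain ⟨x, b, hxD, hbC, hbS, hxb⟩ := cross hr'S (h4 r' hr' a haC) haD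
      have hbw : G.Adj w b := by
        by_contra hno
        exact hbS ⟨hbC, fun h => h.elim (fun he => hwC (he ▸ hbC)) hno⟩
      by_cases hd3 : ∃ c₁, c₁ ∈ C ∧ G.Adj w c₁ ∧ ∃ c₂, c₂ ∈ C ∧ G.Adj c₁ c₂ ∧
          ¬(c₂ = w ∨ G.Adj w c₂) ∧ ∃ c₃, c₃ ∈ C ∧ G.Adj c₂ c₃ ∧ ¬(c₃ = w ∨ G.Adj w c₃) ∧
          ¬(c₃ = c₁ ∨ G.Adj c₁ c₃)
      · -- deep structure: we may afford a new station at w; recurse on the chunk D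
        obtain ⟨c₁, hc₁C, hwc₁, c₂, hc₂C, h12, hc₂w, c₃, hc₃C, h23, hc₃w, hc₃1⟩ := hd3
        have hc₂w' : ¬ G.Adj w c₂ := fun h => hc₂w (Or.inr h)
        have hc₃w' : ¬ G.Adj w c₃ := fun h => hc₃w (Or.inr h)
        have hc₃1' : ¬ G.Adj c₁ c₃ := fun h => hc₃1 (Or.inr h)
        have hpw : ∀ i, p i ≠ w := by
          intro i
          by_cases hi : (i : ℕ) < m - 1
          · exact (hwold i hi).2
          · have hieq : i = ⟨m-1, hm1'⟩ := by
              apply Fin.ext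
              show (i : ℕ) = m - 1
              omega
            rw [hieq]
            exact G.ne_of_adj hwadj
        have hp' : IsIndPath G (extendPath p w) :=
          isIndPath_extend hp hm1 hwadj (fun i hi => (hwold i hi).1) hpw
        -- value lemmas for the extended path
        have hp'lt : ∀ (i : Fin (m+1)) (h : (i:ℕ) < m), extendPath p w i = p ⟨i, h⟩ :=
          fun i h => extendPath_lt h
        have hp'w : ∀ (i : Fin (m+1)), (i:ℕ) = m → extendPath p w i = w :=
          fun i h => extendPath_last (by omega)
        -- length bound: the path p, w, c₁, c₂, c₃ is induced, so m+4 < k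
        have hbound : m + 4 < k := by
          have hq1 : IsIndPath G (extendPath (extendPath p w) c₁) := by
            refine isIndPath_extend hp' (by omega) ?_ ?_ ?_
            · rw [hp'w ⟨m+1-1, by omega⟩ (by simp)]
              exact hwc₁
            · intro i hi
              have hi' : (i : ℕ) < m := by omega
              rw [hp'lt i hi']
              exact (h2 c₁ hc₁C ⟨i, hi'⟩).2
            · intro i
              by_cases hi : (i : ℕ) < m
              · rw [hp'lt i hi]
                exact fun he => (h2 c₁ hc₁C ⟨i, hi⟩).1 he.symm
              · rw [hp'w i (by omega)]
                exact G.ne_of_adj hwc₁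
          have hq1lt : ∀ (i : Fin (m+2)) (h : (i:ℕ) < m),
              extendPath (extendPath p w) c₁ i = p ⟨i, h⟩ := by
            intro i h
            rw [extendPath_lt (show (i:ℕ) < m + 1 by omega)]
            exact hp'lt _ h
          have hq1w : ∀ (i : Fin (m+2)), (i:ℕ) = m →
              extendPath (extendPath p w) c₁ i = w := by
            intro i h
            rw [extendPath_lt (show (i:ℕ) < m + 1 by omega)]
            exact hp'w _ h
          have hq1c1 : ∀ (i : Fin (m+2)), (i:ℕ) = m + 1 →
              extendPath (extendPath p w) c₁ i = c₁ :=
            fun i h => extendPath_last (by omega)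
          have hq2 : IsIndPath G (extendPath (extendPath (extendPath p w) c₁) c₂) := by
            refine isIndPath_extend hq1 (by omega) ?_ ?_ ?_
            · rw [hq1c1 ⟨m+2-1, by omega⟩ rfl]
              exact h12
            · intro i hi
              by_cases him : (i : ℕ) < m
              · rw [hq1lt i him]
                exact (h2 c₂ hc₂C ⟨i, him⟩).2
              · rw [hq1w i (by omega)]
                exact hc₂w'
            · intro i
              by_cases him : (i : ℕ) < m
              · rw [hq1lt i him]
                exact fun he => (h2 c₂ hc₂C ⟨i, him⟩).1 he.symm
              · by_cases him1 : (i : ℕ) = m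
                · rw [hq1w i him1]
                  exact fun he => hc₂w (Or.inl he.symm)
                · rw [hq1c1 i (by omega)]
                  exact G.ne_of_adj h12
          have hq2lt : ∀ (i : Fin (m+3)) (h : (i:ℕ) < m),
              extendPath (extendPath (extendPath p w) c₁) c₂ i = p ⟨i, h⟩ := by
            intro i h
            rw [extendPath_lt (show (i:ℕ) < m + 2 by omega)]
            exact hq1lt _ h
          have hq2w : ∀ (i : Fin (m+3)), (i:ℕ) = m →
              extendPath (extendPath (extendPath p w) c₁) c₂ i = w := by
            intro i h
            rw [extendPath_lt (show (i:ℕ) < m + 2 by omega)]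
            exact hq1w _ h
          have hq2c1 : ∀ (i : Fin (m+3)), (i:ℕ) = m + 1 →
              extendPath (extendPath (extendPath p w) c₁) c₂ i = c₁ := by
            intro i h
            rw [extendPath_lt (show (i:ℕ) < m + 2 by omega)]
            exact hq1c1 _ h
          have hq2c2 : ∀ (i : Fin (m+3)), (i:ℕ) = m + 2 →
              extendPath (extendPath (extendPath p w) c₁) c₂ i = c₂ :=
            fun i h => extendPath_last (by omega)
          have hq3 : IsIndPath G
              (extendPath (extendPath (extendPath (extendPath p w) c₁) c₂) c₃) := by
            refine isIndPath_extend hq2 (by omega) ?_ ?_ ?_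
            · rw [hq2c2 ⟨m+3-1, by omega⟩ rfl]
              exact h23
            · intro i hi
              by_cases him : (i : ℕ) < m
              · rw [hq2lt i him]
                exact (h2 c₃ hc₃C ⟨i, him⟩).2
              · by_cases him1 : (i : ℕ) = m
                · rw [hq2w i him1]
                  exact hc₃w'
                · rw [hq2c1 i (by omega)]
                  exact hc₃1'
            · intro i
              by_cases him : (i : ℕ) < m
              · rw [hq2lt i him]
                exact fun he => (h2 c₃ hc₃C ⟨i, him⟩).1 he.symm
              · by_cases him1 : (i : ℕ) = m
                · rw [hq2w i him1]
                  exact fun he => hc₃w (Or.inl he.symm)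
                · by_cases him2 : (i : ℕ) = m + 1
                  · rw [hq2c1 i him2]
                    exact fun he => hc₃1 (Or.inl he.symm)
                  · rw [hq2c2 i (by omega)]
                    exact G.ne_of_adj h23
          exact no_long_path hPfree _ hq3
        -- recurse on the chunk D with the longer path
        have hDC : D ⊆ C := fun z hz => (hDsub z hz).1
        have hDcard : D.ncard < C.ncard :=
          Set.ncard_lt_ncard ⟨hDC, fun hsub => haD (hsub haC)⟩ (Set.toFinite C)
        refine IH D.ncard (by omega) (m+1) (by omega) (by omega) (extendPath p w) hp' D le_rfl
          ?_ ?_ ?_ b ?_ ?_ ⟨x, hxD, hxb.symm⟩ cops' ?_ r' hrD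
        · -- h2 for the new stage
          intro z hz i
          obtain ⟨hzC, hzw⟩ := hDsub z hz
          by_cases hi : (i : ℕ) < m
          · rw [hp'lt i hi]
            exact h2 z hzC ⟨i, hi⟩
          · rw [hp'w i (by omega)]
            exact ⟨fun he => hzw (Or.inl he), fun hadj => hzw (Or.inr hadj)⟩
        · -- h3 for the new stage
          intro z hz y hady
          obtain ⟨hzC, hzw⟩ := hDsub z hz
          by_cases hyw : y = w ∨ G.Adj w y
          · refine Or.inr ⟨⟨m, by omega⟩, ?_⟩
            rw [hp'w ⟨m, by omega⟩ rfl]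
            exact hyw
          · rcases h3 z hzC y hady with hyC | hzone
            · exact Or.inl (hz.tail hady ⟨hyC, hyw⟩)
            · obtain ⟨i, hi⟩ := hzone
              refine Or.inr ⟨⟨(i:ℕ), by omega⟩, ?_⟩
              rw [hp'lt ⟨(i:ℕ), by omega⟩ i.isLt]
              simpa using hi
        · -- h4 for the new stage
          intro z hz y hy
          exact reach_pairwise hz hy
        · -- witness adjacency
          rw [hp'w ⟨m+1-1, by omega⟩ rfl]
          exact hbw
        · -- witness non-adjacency to older stations
          intro i hi
          have him : (i : ℕ) < m := by omega
          rw [hp'lt i him]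
          exact ⟨(h2 b hbC ⟨i, him⟩).2, fun he => (h2 b hbC ⟨i, him⟩).1 he.symm⟩
        · -- cops positions
          intro i hi
          by_cases him : (i : ℕ) < m
          · rw [hp'lt ⟨(i:ℕ), hi⟩ him]
            have := hst i him
            simpa using this
          · have hieq : i = j₀ := by
              apply Fin.ext
              show (i : ℕ) = m
              omega
            rw [hp'w ⟨(i:ℕ), hi⟩ (by show (i:ℕ) = m; omega), hieq]
            exact hjw
      · -- ENDGAME
        have hu : ∀ z, ReachIn G S x z → G.Adj b z := by
          intro z hz
          induction hz with
          | refl _ => exact hxb.symm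
          | tail h hadj hzS ih =>
            rename_i y z'
            by_contra hbz
            have hz'b : z' ≠ b := fun he => hzS.2 (Or.inr (he ▸ hbw))
            exact hd3 ⟨b, hbC, hbw, y, h.mem_right.1, ih, h.mem_right.2, z', hzS.1, hadj, hzS.2,
              fun hor => hor.elim hz'b hbz⟩
        have huD : ∀ z ∈ D, G.Adj b z := fun z hz => hu z (ReachIn.trans hxD.symm hz)
        have hAcl : ∀ a₁, a₁ ∈ C → G.Adj w a₁ → ∀ a₂, a₂ ∈ C → G.Adj w a₂ → a₁ ≠ a₂ →
            G.Adj a₁ a₂ := by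
          intro a₁ h₁C h₁w a₂ h₂C h₂w hne
          by_contra hno
          refine no_claw hclawfree hwadj.symm h₁w h₂w ?_ ?_ hno ?_ ?_ hne
          · exact (h2 a₁ h₁C ⟨m-1, hm1'⟩).2
          · exact (h2 a₂ h₂C ⟨m-1, hm1'⟩).2
          · exact fun he => (h2 a₁ h₁C ⟨m-1, hm1'⟩).1 he.symm
          · exact fun he => (h2 a₂ h₂C ⟨m-1, hm1'⟩).1 he.symm
        refine win_step (c' := Function.update cops' j₀ b) ?_ ?_
        · intro i
          rcases eq_or_ne i j₀ with rfl | hne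
          · right
            rw [Function.update_self, hjw]
            exact hbw
          · left
            rw [Function.update_of_ne hne]
        · intro r'' hrm
          apply win_catch
          have hupd : Function.update cops' j₀ b j₀ = b := Function.update_self _ _ _
          have hst' : ∀ (i : Fin (k-3)) (h : (i : ℕ) < m),
              Function.update cops' j₀ b i = p ⟨i, h⟩ := by
            intro i hi
            have hne : i ≠ j₀ := by
              intro he
              rw [he, hj₀v] at hi
              omega
            rw [Function.update_of_ne hne]
            exact hst i hi
          rcases hrm with rfl | hadj
          · exact ⟨j₀, Or.inr (by rw [hupd]; exact huD r'' hrD)⟩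
          · rcases h3 r' hr' r'' hadj with hC | hzone
            · by_cases hw'' : r'' = w ∨ G.Adj w r''
              · rcases hw'' with he | hadjw
                · exact absurd (he ▸ hC) hwC
                · rcases eq_or_ne r'' b with rfl | hne
                  · exact ⟨j₀, Or.inl hupd⟩
                  · exact ⟨j₀, Or.inr (by rw [hupd]; exact hAcl b hbC hbw r'' hC hadjw hne.symm)⟩
              · have hmem : r'' ∈ D := hrD.tail hadj ⟨hC, hw''⟩
                exact ⟨j₀, Or.inr (by rw [hupd]; exact huD r'' hmem)⟩
            · exact catch_zone _ hst' r'' hzone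
  -- walk the free cop to w
  have walkind : ∀ (t u : V) (wk : G.Walk u t),
      (∀ (cops' : Fin (k-3) → V),
        (∀ (i : Fin (k-3)) (h : (i : ℕ) < m), cops' i = p ⟨i, h⟩) → cops' j₀ = t →
        ∀ r' ∈ C, Win G cops' r') →
      ∀ (cops' : Fin (k-3) → V),
        (∀ (i : Fin (k-3)) (h : (i : ℕ) < m), cops' i = p ⟨i, h⟩) → cops' j₀ = u →
        ∀ r' ∈ C, Win G cops' r' := by
    intro t u wk
    induction wk with
    | nil =>
      intro HT cops' hst hju r' hr'
      exact HT cops' hst hju r' hr'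
    | @cons u₁ v₁ t₁ hadj wk' ih =>
      intro HT cops' hst hju r' hr'
      refine win_step (c' := Function.update cops' j₀ v₁) ?_ ?_
      · intro i
        rcases eq_or_ne i j₀ with rfl | hne
        · right
          rw [Function.update_self, hju]
          exact hadj
        · left
          rw [Function.update_of_ne hne]
      · intro r'' hrm
        have hst' : ∀ (i : Fin (k-3)) (h : (i : ℕ) < m),
            Function.update cops' j₀ v₁ i = p ⟨i, h⟩ := by
          intro i hi
          have hne : i ≠ j₀ := by
            intro he
            rw [he, hj₀v] at hi
            omega
          rw [Function.update_of_ne hne]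
          exact hst i hi
        have hmem : r'' ∈ C ∨ ∃ i : Fin m, r'' = p i ∨ G.Adj (p i) r'' := by
          rcases hrm with rfl | hadj2
          · exact Or.inl hr'
          · exact h3 r' hr' r'' hadj2
        rcases hmem with hC | hzone
        · exact ih HT (Function.update cops' j₀ v₁) hst' (Function.update_self _ _ _) r'' hC
        · exact win_catch (catch_zone _ hst' r'' hzone)
  obtain ⟨wk⟩ := hconn.preconnected (cops j₀) w
  exact walkind w (cops j₀) wk ATW cops hcops rfl r hr

end CRGame

theorem cop_number_of_path_claw_free {V : Type*} [Fintype V] (G : SimpleGraph V) (k : ℕ)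
    (hk : 5 ≤ k) (hconn : G.Connected)
    (hPfree : IsEmpty (pathGraph k ↪g G))
    (hclawfree : IsEmpty (completeBipartiteGraph (Fin 1) (Fin 3) ↪g G)) :
    copNumber G ≤ k - 3 := by
  classical
  obtain ⟨v₀⟩ := hconn.nonempty
  refine Nat.sInf_le ?_
  show CopWinWith G (k-3)
  apply CRGame.copWinWith_of_win (init := fun _ => v₀)
  intro r₀
  by_cases h0 : r₀ = v₀ ∨ G.Adj v₀ r₀
  · refine CRGame.win_catch ⟨⟨0, by omega⟩, ?_⟩
    rcases h0 with h | h
    · exact Or.inl h.symm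
    · exact Or.inr h
  · set S₀ : Set V := {z | ¬(z = v₀ ∨ G.Adj v₀ z)} with hS₀
    have hr₀ : r₀ ∈ S₀ := h0
    have hv₀C : ¬ CRGame.ReachIn G S₀ r₀ v₀ := fun h => h.mem_right (Or.inl rfl)
    obtain ⟨wkr⟩ := hconn.preconnected r₀ v₀
    obtain ⟨x, b, hxC, _, hbS, hxb⟩ := CRGame.cross hr₀ (CRGame.walk_reachIn wkr) hv₀C
    have hxS : x ∈ S₀ := hxC.mem_right
    have hbv : G.Adj v₀ b := by
      rcases not_not.mp hbS with he | h
      · exact absurd (Or.inr (he ▸ hxb).symm) hxS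
      · exact h
    have hpath1 : CRGame.IsIndPath G (fun _ : Fin 1 => v₀) := by
      constructor
      · intro i j _
        exact Subsingleton.elim i j
      · intro i j
        refine iff_of_false (G.irrefl) ?_
        omega
    refine CRGame.main_lemma hk hconn hPfree hclawfree
      ({z | CRGame.ReachIn G S₀ r₀ z}.ncard) 1 (by omega) le_rfl
      (fun _ => v₀) hpath1 {z | CRGame.ReachIn G S₀ r₀ z} le_rfl ?_ ?_ ?_ b hbv ?_
      ⟨x, hxC, hxb.symm⟩ (fun _ => v₀) (fun i h => rfl) r₀ (CRGame.ReachIn.refl hr₀)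
    · intro z hz i
      have hzS : z ∈ S₀ := hz.mem_right
      exact ⟨fun he => hzS (Or.inl he), fun h => hzS (Or.inr h)⟩
    · intro z hz y hady
      by_cases hyS : y ∈ S₀
      · exact Or.inl (hz.tail hady hyS)
      · exact Or.inr ⟨⟨0, by omega⟩, not_not.mp hyS⟩
    · intro z hz y hy
      exact CRGame.reach_pairwise hz hy
    · intro i hi
      exact absurd hi (by omega)
end

section
/- Let k ≥ 2 and i_1, …, i_k ≥ 1 with at least one i_j ≥ 3. If a finite connected graph G contains no induced subgraph isomorphic to the disjoint union of paths P_{i_1} + P_{i_2} + … + P_{i_k}, then the cop number of G is at most i_1 + i_2 + … + i_k − 2. -/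
open SimpleGraph

/-- The disjoint union of paths `P_{i 0} + P_{i 1} + ⋯`, one path on `i j`
vertices for each `j : Fin k`. -/
def pathsUnion {k : ℕ} (i : Fin k → ℕ) : SimpleGraph (Σ j, Fin (i j)) where
  Adj a b := a.1 = b.1 ∧ (((a.2 : ℕ) + 1 = b.2) ∨ ((b.2 : ℕ) + 1 = a.2))
  symm := ⟨by rintro ⟨ja, a⟩ ⟨jb, b⟩ ⟨h1, h2⟩; exact ⟨h1.symm, h2.symm⟩⟩
  loopless := ⟨by rintro ⟨j, a⟩ ⟨-, h2⟩; omega⟩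

namespace CR
variable {V : Type*} (G : SimpleGraph V) {n : ℕ}

def legalCop (c c' : Fin n → V) : Prop := ∀ i, c' i = c i ∨ G.Adj (c i) (c' i)

def legalRob (r r' : V) : Prop := r' = r ∨ G.Adj r r'

lemma legalCop_refl (c : Fin n → V) : legalCop G c c := fun _ => Or.inl rfl

inductive Attr : (Fin n → V) → V → Prop
  | caught : ∀ c r, (∃ i, c i = r) → Attr c r
  | touch : ∀ c r c', legalCop G c c' → (∃ i, c' i = r) → Attr c r
  | pass : ∀ c r c', legalCop G c c' →
      (∀ r', legalRob G r r' → Attr c' r') → Attr c r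

def win : ℕ → (Fin n → V) → V → Prop
  | 0 => fun c r => ∃ i, c i = r
  | (m+1) => fun c r => (∃ i, c i = r) ∨
      ∃ c', legalCop G c c' ∧ ((∃ i, c' i = r) ∨ ∀ r', legalRob G r r' → win m c' r')

lemma win_mono : ∀ {m m' : ℕ}, m ≤ m' → ∀ {c : Fin n → V} {r}, win G m c r → win G m' c r := by
  intro m
  induction m with
  | zero =>
    intro m' _ c r h
    cases m' with
    | zero => exact h
    | succ m' => exact Or.inl h
  | succ m ih =>
    intro m' hm c r h
    obtain ⟨m', rfl⟩ : ∃ k, m' = k + 1 := ⟨m' - 1, by omega⟩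
    rcases h with h | ⟨c', hc', h⟩
    · exact Or.inl h
    · exact Or.inr ⟨c', hc', h.imp id (fun hh r' hr => ih (by omega) (hh r' hr))⟩

lemma attr_win [Fintype V] {c : Fin n → V} {r : V} (h : Attr G c r) : ∃ m, win G m c r := by
  induction h with
  | caught c r h => exact ⟨0, h⟩
  | touch c r c' hc h => exact ⟨1, Or.inr ⟨c', hc, Or.inl h⟩⟩
  | pass c r c' hc h ih =>
    classical
    choose! g hg using ih
    refine ⟨(Finset.univ.sup g) + 1, Or.inr ⟨c', hc, Or.inr fun r' hr => ?_⟩⟩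
    exact win_mono G (Finset.le_sup (Finset.mem_univ r')) (hg r' hr)

open Classical in
noncomputable def copF : (Fin n → V) → V → (Fin n → V) := fun c r =>
  if h : ∃ c', legalCop G c c' ∧ ((∃ i, c' i = r) ∨ ∀ r', legalRob G r r' →
      win G (sInf {m | win G m c r} - 1) c' r') then h.choose else c

lemma copF_legal (c : Fin n → V) (r : V) : legalCop G c (copF G c r) := by
  unfold copF
  split
  next h => exact h.choose_spec.1
  next => exact legalCop_refl G c

lemma cap (init : Fin n → V) (r₀ : V) (rob : (Fin n → V) → V → V)
    (hrob : ∀ c r, rob c r = r ∨ G.Adj r (rob c r)) :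
    ∀ m t, win G m (copsRobberSeq init (copF G) rob r₀ t).1 (copsRobberSeq init (copF G) rob r₀ t).2 →
      ∃ t', (∃ i, (copsRobberSeq init (copF G) rob r₀ t').1 i = (copsRobberSeq init (copF G) rob r₀ t').2) ∨
           (∃ i, (copsRobberSeq init (copF G) rob r₀ (t' + 1)).1 i = (copsRobberSeq init (copF G) rob r₀ t').2) := by
  intro m
  induction m using Nat.strong_induction_on with
  | _ m ih =>
    intro t hwin
    set c := (copsRobberSeq init (copF G) rob r₀ t).1 with hc
    set r := (copsRobberSeq init (copF G) rob r₀ t).2 with hr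
    have hne : {m' | win G m' c r}.Nonempty := ⟨m, hwin⟩
    have hmem : win G (sInf {m' | win G m' c r}) c r := Nat.sInf_mem hne
    have hle : sInf {m' | win G m' c r} ≤ m := Nat.sInf_le hwin
    rcases hm0 : sInf {m' | win G m' c r} with _ | mm
    · rw [hm0] at hmem
      exact ⟨t, Or.inl hmem⟩
    · rw [hm0] at hmem
      rcases hmem with hcaught | ⟨c'', hc'', h''⟩
      · exact ⟨t, Or.inl hcaught⟩
      · have hdite : ∃ c', legalCop G c c' ∧ ((∃ i, c' i = r) ∨ ∀ r', legalRob G r r' →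
            win G (sInf {m' | win G m' c r} - 1) c' r') := by
          refine ⟨c'', hc'', h''.imp id fun hh r' hr => ?_⟩
          rw [hm0]; simpa using hh r' hr
        have hF : copF G c r = hdite.choose := by
          unfold copF
          rw [dif_pos hdite]
        have hspec := hdite.choose_spec
        have hseq : (copsRobberSeq init (copF G) rob r₀ (t+1)) =
            (copF G c r, rob (copF G c r) r) := by
          rw [copsRobberSeq]
        rcases hspec.2 with htouch | hrep
        · refine ⟨t, Or.inr ?_⟩
          rw [hseq, hF]
          exact htouch
        · have hwin' : win G mm (copsRobberSeq init (copF G) rob r₀ (t+1)).1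
              (copsRobberSeq init (copF G) rob r₀ (t+1)).2 := by
            rw [hseq, hF]
            have : legalRob G r (rob hdite.choose r) := by
              rcases hrob hdite.choose r with h | h
              · exact Or.inl h
              · exact Or.inr h
            have h2 := hrep _ this
            exact win_mono G (le_of_eq (by omega : sInf {m' | win G m' c r} - 1 = mm)) h2
          exact ih mm (by omega) (t+1) hwin'

lemma copWinWith_of_attr [Fintype V] [Nonempty V]
    (h : ∀ (c : Fin n → V) (r : V), Attr G c r) : CopWinWith G n := by
  classical
  refine ⟨fun _ => Classical.arbitrary V, copF G, fun c r i => copF_legal G c r i, ?_⟩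
  intro r₀ rob hrob
  obtain ⟨m, hm⟩ := attr_win G (h (fun _ => Classical.arbitrary V) r₀)
  exact cap G _ r₀ rob hrob m 0 hm

/-! ### Evasion predicate and components -/

section EscSec
variable {V : Type*} (G : SimpleGraph V) {n : ℕ}

def Esc (c : Fin n → V) (r : V) : Prop := ¬ Attr G c r

variable {G}

lemma esc_no_touch {c c' : Fin n → V} {r : V} (h : Esc G c r) (hc : legalCop G c c') :
    ∀ i, c' i ≠ r := fun i hi => h (Attr.touch c r c' hc ⟨i, hi⟩)

lemma esc_step {c c' : Fin n → V} {r : V} (h : Esc G c r) (hc : legalCop G c c') :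
    ∃ r', legalRob G r r' ∧ Esc G c' r' := by
  by_contra hx
  push_neg at hx
  exact h (Attr.pass c r c' hc (fun r' hr => not_not.mp (hx r' hr)))

lemma esc_ne {c : Fin n → V} {r : V} (h : Esc G c r) (i : Fin n) : c i ≠ r :=
  esc_no_touch h (legalCop_refl G c) i

lemma esc_not_adj {c : Fin n → V} {r : V} (h : Esc G c r) (i : Fin n) : ¬ G.Adj (c i) r := by
  classical
  intro ha
  refine esc_no_touch h (c' := Function.update c i r) (fun j => ?_) i (Function.update_self i r c)
  by_cases hj : j = i
  · subst hj
    rw [Function.update_self]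
    exact Or.inr ha
  · rw [Function.update_of_ne hj]
    exact Or.inl rfl

end EscSec

section CompSec
variable {V : Type*} (G : SimpleGraph V)

/-- the set of vertices not in nor adjacent to `P` -/
def avoidS (P : Set V) : Set V := {v | ∀ u ∈ P, v ≠ u ∧ ¬ G.Adj u v}

def stepIn (W : Set V) (a b : V) : Prop := G.Adj a b ∧ a ∈ W ∧ b ∈ W

/-- connected component of the induced subgraph on `W` containing `u` -/
def comp (W : Set V) (u : V) : Set V := {v | v ∈ W ∧ Relation.ReflTransGen (stepIn G W) u v}

variable {G}

lemma avoidS_mono {P Q : Set V} (h : P ⊆ Q) : avoidS G Q ⊆ avoidS G P :=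
  fun _ hv u hu => hv u (h hu)

lemma stepIn_symm {W : Set V} : Symmetric (stepIn G W) :=
  fun _ _ h => ⟨h.1.symm, h.2.2, h.2.1⟩

lemma reach_symm {W : Set V} {a b : V} (h : Relation.ReflTransGen (stepIn G W) a b) :
    Relation.ReflTransGen (stepIn G W) b a :=
  by
    haveI : Std.Symm (stepIn G W) := ⟨fun a b hab => stepIn_symm hab⟩
    exact Std.Symm.symm _ _ h

lemma mem_comp_self {W : Set V} {u : V} (h : u ∈ W) : u ∈ comp G W u :=
  ⟨h, Relation.ReflTransGen.refl⟩

lemma comp_subset {W : Set V} {u : V} : comp G W u ⊆ W := fun _ h => h.1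

lemma comp_eq_of_mem {W : Set V} {u v : V} (h : v ∈ comp G W u) :
    comp G W v = comp G W u := by
  ext w
  constructor
  · rintro ⟨hw, hr⟩
    exact ⟨hw, h.2.trans hr⟩
  · rintro ⟨hw, hr⟩
    exact ⟨hw, (reach_symm h.2).trans hr⟩

lemma comp_extend {W : Set V} {u v w : V} (h : v ∈ comp G W u) (ha : G.Adj v w) (hw : w ∈ W) :
    w ∈ comp G W u :=
  ⟨hw, h.2.tail ⟨ha, h.1, hw⟩⟩

lemma comp_extend_rob {W : Set V} {u v w : V} (h : v ∈ comp G W u) (ha : legalRob G v w)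
    (hw : w ∈ W) : w ∈ comp G W u := by
  rcases ha with rfl | ha
  · exact h
  · exact comp_extend h ha hw

lemma comp_mono {W' W : Set V} {u u' : V} (hW : W' ⊆ W) (hu' : u' ∈ comp G W u) :
    comp G W' u' ⊆ comp G W u := by
  intro v hv
  have h1 : v ∈ comp G W u' := by
    refine ⟨hW hv.1, ?_⟩
    exact Relation.ReflTransGen.mono (p := stepIn G W) (fun a b hab => ⟨hab.1, hW hab.2.1, hW hab.2.2⟩) _ _ hv.2
  rw [comp_eq_of_mem hu'] at h1
  exact h1

/-- a vertex adjacent to the component, lying in W, must be in the component -/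
lemma mem_comp_of_adj {W : Set V} {u z w : V} (hz : z ∈ W) (hw : w ∈ comp G W u)
    (ha : G.Adj z w) : z ∈ comp G W u :=
  comp_extend hw ha.symm hz

lemma comp_boundary {W : Set V} {u v₀ ρ : V} {D' : Set V}
    (hD'sub : D' ⊆ comp G W u) (hv₀ : v₀ ∈ comp G W u) (hv₀' : v₀ ∉ D') (hρ : ρ ∈ D') :
    ∃ z w, z ∈ comp G W u ∧ z ∉ D' ∧ w ∈ D' ∧ G.Adj z w := by
  classical
  have hreach : Relation.ReflTransGen (stepIn G W) v₀ ρ :=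
    (reach_symm hv₀.2).trans (hD'sub hρ).2
  have key : ∀ a b : V, Relation.ReflTransGen (stepIn G W) a b →
      a ∈ comp G W u → b ∈ D' →
      (a ∈ D' ∨ ∃ z w, z ∈ comp G W u ∧ z ∉ D' ∧ w ∈ D' ∧ G.Adj z w) := by
    intro a b hab
    induction hab using Relation.ReflTransGen.head_induction_on with
    | refl => intro ha hb; exact Or.inl hb
    | head hst hrest ih =>
      rename_i a' c' 
      intro ha hb
      have hc' : c' ∈ comp G W u := comp_extend ha hst.1 hst.2.2
      rcases ih hc' hb with hcD | hdone
      · by_cases haD : a' ∈ D'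
        · exact Or.inl haD
        · exact Or.inr ⟨a', c', ha, haD, hcD, hst.1⟩
      · exact Or.inr hdone
  rcases key v₀ ρ hreach hv₀ hρ with h | h
  · exact absurd h hv₀'
  · exact h

lemma comp_no_edge_subsingleton {W : Set V} {u v : V}
    (hne : ∀ a b, a ∈ comp G W u → b ∈ comp G W u → ¬ G.Adj a b)
    (hv : v ∈ comp G W u) (hu : u ∈ W) : v = u := by
  rcases (Relation.ReflTransGen.cases_head hv.2) with h | ⟨c, hst, _⟩
  · exact h.symm
  · exact absurd hst.1 (hne u c (mem_comp_self hu) (mem_comp_self hu |> fun h0 => comp_extend h0 hst.1 hst.2.2))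

end CompSec

/-! ### Cop relocation while robber evades -/

section MoveSec
variable {V : Type*} {G : SimpleGraph V} {n : ℕ}

/-- a cop move that keeps all coordinates in `S` fixed -/
def pstep (G : SimpleGraph V) (S : Set (Fin n)) (c c' : Fin n → V) : Prop :=
  legalCop G c c' ∧ ∀ i ∈ S, c' i = c i

lemma rtg_fix {S : Set (Fin n)} {c c' : Fin n → V}
    (h : Relation.ReflTransGen (pstep G S) c c') : ∀ i ∈ S, c' i = c i := by
  induction h with
  | refl => exact fun i _ => rfl
  | tail _ hst ih => exact fun i hi => (hst.2 i hi).trans (ih i hi)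

lemma esc_mem_avoid {P : Set V} {c : Fin n → V} {r : V}
    (hP : ∀ u ∈ P, ∃ i, c i = u) (h : Esc G c r) : r ∈ avoidS G P := by
  intro u hu
  obtain ⟨i, rfl⟩ := hP u hu
  exact ⟨fun he => (esc_ne h i) he.symm, esc_not_adj h i⟩

lemma esc_rtg {S : Set (Fin n)} {P : Set V} {c₀ c₁ : Fin n → V}
    (hme : Relation.ReflTransGen (pstep G S) c₀ c₁)
    (hP : ∀ u ∈ P, ∃ i ∈ S, c₀ i = u) :
    ∀ {r₀ : V} {K : Set V}, Esc G c₀ r₀ → r₀ ∈ K →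
    (∀ v w, v ∈ K → legalRob G v w → w ∈ avoidS G P → w ∈ K) →
    ∃ r₁, Esc G c₁ r₁ ∧ r₁ ∈ K := by
  induction hme using Relation.ReflTransGen.head_induction_on with
  | refl =>
    intro r₀ K h hr _
    exact ⟨r₀, h, hr⟩
  | @head a c hst hrest ih =>
    intro r₀ K h hr hcl
    obtain ⟨r', hleg, hesc'⟩ := esc_step h hst.1
    have hPc : ∀ u ∈ P, ∃ i ∈ S, c i = u := by
      intro u hu
      obtain ⟨i, hiS, hie⟩ := hP u hu
      exact ⟨i, hiS, (hst.2 i hiS).trans hie⟩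
    have hr' : r' ∈ K := hcl r₀ r' hr hleg
      (esc_mem_avoid (fun u hu => (hPc u hu).imp (fun i hi => hi.2)) hesc')
    exact ih hPc hesc' hr' hcl
end MoveSec

section ReachSec
variable {V : Type*} {G : SimpleGraph V} {n : ℕ}

lemma reach_update (hconn : G.Connected) (S : Set (Fin n)) {i : Fin n} (hiS : i ∉ S)
    (c : Fin n → V) (v : V) :
    Relation.ReflTransGen (pstep G S) c (Function.update c i v) := by
  classical
  obtain ⟨w⟩ := hconn.preconnected (c i) v
  clear hconn
  have : ∀ (u v : V) (w : G.Walk u v) (c : Fin n → V), c i = u →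
      Relation.ReflTransGen (pstep G S) c (Function.update c i v) := by
    intro u v w
    induction w with
    | nil =>
      intro c hc
      rw [← hc, Function.update_eq_self]
    | @cons a b d hab w ih =>
      intro c hc
      have h1 : pstep G S c (Function.update c i b) := by
        constructor
        · intro j
          by_cases hj : j = i
          · subst hj
            rw [Function.update_self, hc]
            exact Or.inr hab
          · rw [Function.update_of_ne hj]
            exact Or.inl rfl
        · intro j hj
          have hji : j ≠ i := fun he => hiS (he ▸ hj)
          rw [Function.update_of_ne hji]
      have h2 := ih (Function.update c i b) (Function.update_self i b c)
      rw [Function.update_idem] at h2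
      exact Relation.ReflTransGen.head h1 h2
  exact this (c i) v w c rfl

/-- cops can reach any configuration (moving all coordinates) -/
lemma reach_any (hconn : G.Connected) (c target : Fin n → V) :
    Relation.ReflTransGen (pstep G (∅ : Set (Fin n))) c target := by
  classical
  have main : ∀ k : ℕ, k ≤ n →
      Relation.ReflTransGen (pstep G (∅ : Set (Fin n))) c
        (fun j => if (j : ℕ) < k then target j else c j) := by
    intro k
    induction k with
    | zero =>
      intro _
      have : (fun j : Fin n => if (j : ℕ) < 0 then target j else c j) = c := by
        funext j; simp
      rw [this]
    | succ k ih =>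
      intro hk
      have hrtg := ih (by omega)
      set ck := (fun j : Fin n => if (j : ℕ) < k then target j else c j) with hck
      have hupd : (fun j : Fin n => if (j : ℕ) < k + 1 then target j else c j) =
          Function.update ck ⟨k, by omega⟩ (target ⟨k, by omega⟩) := by
        funext j
        by_cases hj : j = (⟨k, by omega⟩ : Fin n)
        · subst hj
          rw [Function.update_self]
          simp
        · rw [Function.update_of_ne hj]
          have hjk : (j : ℕ) ≠ k := fun he => hj (Fin.ext he)
          show (if (j:ℕ) < k + 1 then target j else c j) = if (j:ℕ) < k then target j else c j
          by_cases h2 : (j : ℕ) < k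
          · rw [if_pos h2, if_pos (by omega)]
          · rw [if_neg h2, if_neg (by omega)]
      rw [hupd]
      exact hrtg.trans (reach_update hconn _ (Set.notMem_empty _) ck _)
  have := main n (le_refl n)
  have he : (fun j : Fin n => if (j : ℕ) < n then target j else c j) = target := by
    funext j; rw [if_pos j.isLt]
  rwa [he] at this

end ReachSec

/-! ### Induced disjoint unions of paths -/

section IndFSec
variable {V : Type*} (G : SimpleGraph V)

def isPath {m : ℕ} (x : Fin m → V) : Prop :=
  Function.Injective x ∧ ∀ a b : Fin m, G.Adj (x a) (x b) ↔ (((a:ℕ)+1 = b) ∨ ((b:ℕ)+1 = a))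

def apart {m : ℕ} (x : Fin m → V) (W : Set V) : Set V :=
  {v | v ∈ W ∧ ∀ a, v ≠ x a ∧ ¬ G.Adj v (x a)}

def IndF : List ℕ → Set V → Prop
  | [], _ => True
  | (m :: L), W => ∃ x : Fin m → V, isPath G x ∧ (∀ a, x a ∈ W) ∧ IndF L (apart G x W)

variable {G}

lemma apart_comm {m₁ m₂ : ℕ} (x : Fin m₁ → V) (y : Fin m₂ → V) (W : Set V) :
    apart G x (apart G y W) = apart G y (apart G x W) := by
  ext v
  constructor <;> rintro ⟨⟨h1, h2⟩, h3⟩ <;> exact ⟨⟨h1, h3⟩, h2⟩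

lemma indF_perm {L₁ L₂ : List ℕ} (hp : L₁.Perm L₂) :
    ∀ W : Set V, IndF G L₁ W → IndF G L₂ W := by
  induction hp with
  | nil => exact fun W h => h
  | cons m hp ih =>
    rintro W ⟨x, hx, hm, hrest⟩
    exact ⟨x, hx, hm, ih _ hrest⟩
  | swap m₁ m₂ l =>
    rintro W ⟨a, pa, ma, b, pb, mb, rest⟩
    refine ⟨b, pb, fun c => (mb c).1, a, pa, ?_, ?_⟩
    · intro c
      refine ⟨ma c, fun d => ?_⟩
      obtain ⟨hbW, hbav⟩ := mb d
      exact ⟨fun he => (hbav c).1 he.symm, fun hadj => (hbav c).2 hadj.symm⟩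
    · rw [apart_comm]
      exact rest
  | trans h₁ h₂ ih₁ ih₂ =>
    exact fun W h => ih₂ W (ih₁ W h)

lemma indF_extend : ∀ (L : List ℕ) (W : Set V), IndF G L W →
    ∃ A : List V, A.length = L.sum ∧
      ∀ (M : ℕ) (x : Fin M → V), isPath G x → (∀ a, x a ∈ W) →
        (∀ (a : Fin M), ∀ b ∈ A, x a ≠ b ∧ ¬ G.Adj (x a) b) → IndF G (L ++ [M]) W := by
  intro L
  induction L with
  | nil =>
    intro W _
    exact ⟨[], rfl, fun M x hx hW _ => ⟨x, hx, hW, trivial⟩⟩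
  | cons m L ih =>
    rintro W ⟨y, py, my, hrest⟩
    obtain ⟨A', hA', hext⟩ := ih (apart G y W) hrest
    refine ⟨List.ofFn y ++ A', by simp [hA'], ?_⟩
    intro M x px hxW hav
    refine ⟨y, py, my, hext M x px ?_ ?_⟩
    · intro a
      refine ⟨hxW a, fun b => hav a (y b) (List.mem_append_left _ ?_)⟩
      rw [List.mem_ofFn]
      exact ⟨b, rfl⟩
    · intro a b hb
      exact hav a b (List.mem_append_right _ hb)

end IndFSec

section BridgeSec
variable {V : Type*} {G : SimpleGraph V}

lemma indF_ofFn {k : ℕ} : ∀ (i : Fin k → ℕ) (W : Set V), IndF G (List.ofFn i) W →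
    ∃ f : (Σ j : Fin k, Fin (i j)) → V, (∀ p, f p ∈ W) ∧ Function.Injective f ∧
      ∀ p q, G.Adj (f p) (f q) ↔
        (p.1 = q.1 ∧ (((p.2:ℕ)+1 = (q.2:ℕ)) ∨ ((q.2:ℕ)+1 = (p.2:ℕ)))) := by
  induction k with
  | zero =>
    intro i W _
    exact ⟨fun p => p.1.elim0, fun p => p.1.elim0, fun p => p.1.elim0, fun p => p.1.elim0⟩
  | succ k ih =>
    intro i W h
    rw [List.ofFn_succ] at h
    obtain ⟨x, px, mx, hrest⟩ := h
    obtain ⟨g, hgW, hginj, hgadj⟩ := ih (fun j => i j.succ) (apart G x W) hrest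
    refine ⟨fun p => Fin.cases (motive := fun j => Fin (i j) → V) (fun a => x a)
      (fun j' a => g ⟨j', a⟩) p.1 p.2, ?_, ?_, ?_⟩
    · rintro ⟨j, a⟩
      induction j using Fin.cases with
      | zero => exact mx a
      | succ j' => exact (hgW ⟨j', a⟩).1
    · rintro ⟨j1, a⟩ ⟨j2, b⟩ he
      induction j1 using Fin.cases with
      | zero =>
        induction j2 using Fin.cases with
        | zero =>
          have : a = b := px.1 he
          rw [this]
        | succ j2' =>
          exact absurd he.symm ((hgW ⟨j2', b⟩).2 a).1
      | succ j1' =>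
        induction j2 using Fin.cases with
        | zero =>
          exact absurd he ((hgW ⟨j1', a⟩).2 b).1
        | succ j2' =>
          have : (⟨j1', a⟩ : Σ j' : Fin k, Fin (i j'.succ)) = ⟨j2', b⟩ := hginj he
          obtain ⟨h1, h2⟩ := Sigma.mk.inj_iff.mp this
          subst h1
          rw [eq_of_heq h2]
    · rintro ⟨j1, a⟩ ⟨j2, b⟩
      induction j1 using Fin.cases with
      | zero =>
        induction j2 using Fin.cases with
        | zero =>
          show G.Adj (x a) (x b) ↔ _
          rw [px.2 a b]
          simp
        | succ j2' =>
          show G.Adj (x a) (g ⟨j2', b⟩) ↔ _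
          constructor
          · intro hadj
            exact absurd hadj.symm ((hgW ⟨j2', b⟩).2 a).2
          · rintro ⟨h0, -⟩
            exact absurd h0.symm (Fin.succ_ne_zero j2')
      | succ j1' =>
        induction j2 using Fin.cases with
        | zero =>
          show G.Adj (g ⟨j1', a⟩) (x b) ↔ _
          constructor
          · intro hadj
            exact absurd hadj ((hgW ⟨j1', a⟩).2 b).2
          · rintro ⟨h0, -⟩
            exact absurd h0 (Fin.succ_ne_zero j1')
        | succ j2' =>
          show G.Adj (g ⟨j1', a⟩) (g ⟨j2', b⟩) ↔ _
          rw [hgadj ⟨j1', a⟩ ⟨j2', b⟩]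
          simp [Fin.succ_inj]

end BridgeSec

/-! ### The Gyárfás path construction -/

section WsetSec
variable {V : Type*} (G : SimpleGraph V)

def Wset (Aset : Set V) (x : ℕ → V) (p : ℕ) : Set V :=
  avoidS G (Aset ∪ (x '' {q | q < p}))

variable {G}

lemma mem_Wset {Aset : Set V} {x : ℕ → V} {p : ℕ} {v : V} :
    v ∈ Wset G Aset x p ↔
      (∀ u ∈ Aset, v ≠ u ∧ ¬ G.Adj u v) ∧ (∀ q, q < p → v ≠ x q ∧ ¬ G.Adj (x q) v) := by
  constructor
  · intro h
    exact ⟨fun u hu => h u (Or.inl hu), fun q hq => h (x q) (Or.inr ⟨q, hq, rfl⟩)⟩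
  · rintro ⟨h1, h2⟩ u (hu | ⟨q, hq, rfl⟩)
    · exact h1 u hu
    · exact h2 q hq

lemma Wset_congr {Aset : Set V} {x x' : ℕ → V} {p : ℕ}
    (h : ∀ q, q < p → x q = x' q) : Wset G Aset x p = Wset G Aset x' p := by
  have hs : Aset ∪ (x '' {q | q < p}) = Aset ∪ (x' '' {q | q < p}) := by
    ext v
    constructor
    · rintro (hv | ⟨q, hq, rfl⟩)
      · exact Or.inl hv
      · exact Or.inr ⟨q, hq, (h q hq).symm⟩
    · rintro (hv | ⟨q, hq, rfl⟩)
      · exact Or.inl hv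
      · exact Or.inr ⟨q, hq, h q hq⟩
  unfold Wset
  rw [hs]

lemma Wset_anti {Aset : Set V} {x : ℕ → V} {p p' : ℕ} (h : p ≤ p') :
    Wset G Aset x p' ⊆ Wset G Aset x p := by
  apply avoidS_mono
  apply Set.union_subset_union_right
  exact Set.image_mono (fun q hq => lt_of_lt_of_le hq h)

/-- picking the next vertex of the path: a vertex `z` outside the robber's
current territory `D'`, adjacent both to `D'` and to the previous path vertex `y`. -/
lemma pick {W W' D D' : Set V} {u u' w₀ ρ y : V}
    (hDcomp : D = comp G W u) (hD'sub : D' ⊆ D) (hD'comp : D' = comp G W' u')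
    (hsplit : ∀ v, v ∈ D → v ∉ W' → (v = y ∨ G.Adj y v))
    (hynot : ∀ w ∈ D', ¬ G.Adj y w)
    (hw₀ : w₀ ∈ D) (hw₀' : w₀ ∉ D') (hρ : ρ ∈ D') :
    ∃ z w, z ∈ D ∧ z ∉ D' ∧ w ∈ D' ∧ G.Adj z w ∧ G.Adj y z := by
  subst hDcomp
  obtain ⟨z, w, hzD, hzD', hwD', hadj⟩ := comp_boundary hD'sub hw₀ hw₀' hρ
  have hzW' : z ∉ W' := by
    intro hzW'
    apply hzD'
    rw [hD'comp]
    exact mem_comp_of_adj hzW' (hD'comp ▸ hwD') hadj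
  rcases hsplit z hzD hzW' with rfl | hy
  · exact absurd hadj (hynot w hwD')
  · exact ⟨z, w, hzD, hzD', hwD', hadj, hy⟩

end WsetSec

section CoreMain
variable {V : Type*} {G : SimpleGraph V} {n : ℕ}


lemma pick_level {Aset : Set V} {x : ℕ → V} {D : ℕ → Set V} {j : ℕ} (hj : 1 ≤ j)
    (hcomp : ∀ p, p ≤ j → ∃ u, u ∈ Wset G Aset x p ∧ D p = comp G (Wset G Aset x p) u)
    (hsub : D j ⊆ D (j-1))
    (hwit : ∃ w, w ∈ D (j-1) ∧ (w = x (j-1) ∨ G.Adj (x (j-1)) w))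
    {r : V} (hrD : r ∈ D j) :
    ∃ z w, z ∈ D (j-1) ∧ z ∉ D j ∧ w ∈ D j ∧ G.Adj z w ∧ G.Adj (x (j-1)) z := by
  obtain ⟨u', hu'W, hDj⟩ := hcomp j (le_refl j)
  obtain ⟨u, huW, hDp⟩ := hcomp (j-1) (by omega)
  obtain ⟨w₀, hw₀D, hw₀y⟩ := hwit
  have hDjW : D j ⊆ Wset G Aset x j := by rw [hDj]; exact comp_subset
  have hw₀' : w₀ ∉ D j := by
    intro hmem
    obtain ⟨-, h2⟩ := mem_Wset.mp (hDjW hmem)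
    rcases hw₀y with heq | hadj'
    · exact (h2 (j-1) (by omega)).1 heq
    · exact (h2 (j-1) (by omega)).2 hadj'
  have hsplit : ∀ v, v ∈ D (j-1) → v ∉ Wset G Aset x j →
      (v = x (j-1) ∨ G.Adj (x (j-1)) v) := by
    intro v hv hnv
    by_contra hcon
    push_neg at hcon
    apply hnv
    have hvW : v ∈ Wset G Aset x (j-1) := by rw [hDp] at hv; exact comp_subset hv
    obtain ⟨hA, hq⟩ := mem_Wset.mp hvW
    refine mem_Wset.mpr ⟨hA, fun q hq' => ?_⟩
    by_cases hqj : q < j - 1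
    · exact hq q hqj
    · have hqe : q = j - 1 := by omega
      subst hqe
      exact hcon
  have hynot : ∀ w ∈ D j, ¬ G.Adj (x (j-1)) w := by
    intro w hw
    exact ((mem_Wset.mp (hDjW hw)).2 (j-1) (by omega)).2
  exact pick hDp hsub hDj hsplit hynot hw₀D hw₀' hrD

lemma core (hconn : G.Connected) (A : List V) (M : ℕ) (hM : 1 ≤ M)
    (hbud : A.length + (M - 2) ≤ n) (hbud2 : M = 2 → A.length + 1 ≤ n)
    (hforb : ∀ (X : Fin M → V), isPath G X →
        (∀ (a : Fin M), ∀ b ∈ A, X a ≠ b ∧ ¬ G.Adj (X a) b) → False)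
    (c₀ : Fin n → V) (r₀ : V) (hesc : Esc G c₀ r₀) : False := by
  classical
  set Aset : Set V := {v | v ∈ A} with hAset
  have hhn : A.length ≤ n := le_trans (Nat.le_add_right _ _) hbud
  set cA : Fin n → V := fun i => if hi : (i:ℕ) < A.length then A.get ⟨(i:ℕ), hi⟩ else c₀ i with hcA
  obtain ⟨r₁, hesc₁, -⟩ := esc_rtg (reach_any hconn c₀ cA)
      (P := (∅ : Set V)) (fun u hu => absurd hu (Set.notMem_empty u))
      hesc (Set.mem_univ r₀) (fun v w _ _ _ => Set.mem_univ w)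
  have hAcoordA : ∀ u ∈ Aset, ∃ i : Fin n, (i:ℕ) < A.length ∧ cA i = u := by
    intro u hu
    obtain ⟨t, ht⟩ := List.mem_iff_get.mp hu
    refine ⟨⟨(t:ℕ), lt_of_lt_of_le t.isLt hhn⟩, t.isLt, ?_⟩
    show (if hi : ((⟨(t:ℕ), lt_of_lt_of_le t.isLt hhn⟩ : Fin n):ℕ) < A.length
        then A.get ⟨_, hi⟩ else c₀ _) = u
    rw [dif_pos t.isLt]
    rw [← ht]
  have hr₁W : r₁ ∈ avoidS G Aset :=
    esc_mem_avoid (fun u hu => (hAcoordA u hu).imp (fun i hi => hi.2)) hesc₁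
  rcases show M = 1 ∨ M = 2 ∨ 3 ≤ M by omega with h1 | h2 | h3
  · -- M = 1
    subst h1
    refine hforb (fun _ => r₁) ⟨fun a b _ => Subsingleton.elim a b, ?_⟩ ?_
    · intro a b
      constructor
      · intro hadj
        exact (G.irrefl hadj).elim
      · intro hcons
        obtain rfl : a = b := Subsingleton.elim a b
        omega
    · intro a b hb
      obtain ⟨hne, hnadj⟩ := hr₁W b hb
      exact ⟨hne, fun hadj => hnadj hadj.symm⟩
  · -- M = 2
    subst h2
    set D₀ := comp G (avoidS G Aset) r₁ with hD₀
    by_cases hedge : ∃ u w, u ∈ D₀ ∧ w ∈ D₀ ∧ G.Adj u w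
    · obtain ⟨u, w, huD, hwD, huw⟩ := hedge
      have hmem : ∀ a : Fin 2, (fun a : Fin 2 => if (a:ℕ) = 0 then u else w) a ∈ avoidS G Aset := by
        intro a
        by_cases ha : (a:ℕ) = 0
        · simpa [ha] using comp_subset huD
        · simpa [ha] using comp_subset hwD
      refine hforb (fun a : Fin 2 => if (a:ℕ) = 0 then u else w) ⟨?_, ?_⟩ ?_
      · intro a b he
        have he' : (if (a:ℕ) = 0 then u else w) = (if (b:ℕ) = 0 then u else w) := he
        have ha := a.isLt
        have hb := b.isLt
        by_cases h0 : (a:ℕ) = 0 <;> by_cases h0' : (b:ℕ) = 0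
        · exact Fin.ext (by omega)
        · rw [if_pos h0, if_neg h0'] at he'
          exact absurd he' huw.ne
        · rw [if_neg h0, if_pos h0'] at he'
          exact absurd he'.symm huw.ne
        · exact Fin.ext (by omega)
      · intro a b
        show G.Adj (if (a:ℕ) = 0 then u else w) (if (b:ℕ) = 0 then u else w) ↔ _
        have ha := a.isLt
        have hb := b.isLt
        by_cases h0 : (a:ℕ) = 0 <;> by_cases h0' : (b:ℕ) = 0
        · rw [if_pos h0, if_pos h0']
          exact iff_of_false (G.irrefl) (by omega)
        · rw [if_pos h0, if_neg h0']
          exact iff_of_true huw (by omega)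
        · rw [if_neg h0, if_pos h0']
          exact iff_of_true huw.symm (by omega)
        · rw [if_neg h0, if_neg h0']
          exact iff_of_false (G.irrefl) (by omega)
      · intro a b hb
        obtain ⟨hne, hnadj⟩ := hmem a b hb
        exact ⟨hne, fun hadj => hnadj hadj.symm⟩
    · push_neg at hedge
      have hsing : ∀ v ∈ D₀, v = r₁ := by
        intro v hv
        exact comp_no_edge_subsingleton (fun a b ha hb => hedge a b ha hb) hv hr₁W
      have hn1 : A.length < n := by have := hbud2 rfl; omega
      set i₁ : Fin n := ⟨A.length, hn1⟩ with hi₁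
      set S : Set (Fin n) := {i | (i:ℕ) < A.length} with hS
      have hrtg := reach_update hconn S (show i₁ ∉ S by simp [hS, hi₁]) cA r₁
      obtain ⟨r₂, hesc₂, hr₂D⟩ := esc_rtg hrtg
          (P := Aset) (fun u hu => (hAcoordA u hu).imp (fun i hi => ⟨hi.1, hi.2⟩))
          hesc₁ (mem_comp_self hr₁W)
          (fun v w hv hleg hw => comp_extend_rob hv hleg hw)
      have hr₂ : r₂ = r₁ := hsing r₂ hr₂D
      have := esc_ne hesc₂ i₁
      rw [Function.update_self, hr₂] at this
      exact this rfl
  · -- main case: 3 ≤ M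
    have stage : ∀ j, j ≤ M - 2 → ∃ (x : ℕ → V) (D : ℕ → Set V) (c : Fin n → V) (r : V),
        Esc G c r ∧
        (∀ u ∈ Aset, ∃ i : Fin n, (i:ℕ) < A.length ∧ c i = u) ∧
        (∀ p, p < j → ∃ i : Fin n, (i:ℕ) = A.length + p ∧ c i = x p) ∧
        (∀ p, p ≤ j → ∃ u, u ∈ Wset G Aset x p ∧ D p = comp G (Wset G Aset x p) u) ∧
        (∀ p q, p ≤ q → q ≤ j → D q ⊆ D p) ∧
        (1 ≤ j → x 0 ∈ D 0) ∧
        (∀ p, p + 1 < j → x (p+1) ∈ D p) ∧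
        (∀ p, p + 1 < j → G.Adj (x p) (x (p+1))) ∧
        (∀ p, 1 ≤ p → p ≤ j → ∃ w, w ∈ D (p-1) ∧ (w = x (p-1) ∨ G.Adj (x (p-1)) w)) ∧
        r ∈ D j := by
      intro j
      induction j with
      | zero =>
        intro _
        have hr₁W0 : r₁ ∈ Wset G Aset (fun _ => r₁) 0 :=
          mem_Wset.mpr ⟨fun u hu => hr₁W u hu, fun q hq => absurd hq (Nat.not_lt_zero q)⟩
        refine ⟨fun _ => r₁, fun _ => comp G (Wset G Aset (fun _ => r₁) 0) r₁, cA, r₁,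
          hesc₁, hAcoordA, fun p hp => absurd hp (Nat.not_lt_zero p), ?_, ?_, ?_, ?_, ?_, ?_, ?_⟩
        · intro p hp
          obtain rfl : p = 0 := Nat.le_zero.mp hp
          exact ⟨r₁, hr₁W0, rfl⟩
        · intro p q hpq hq
          obtain rfl : q = 0 := Nat.le_zero.mp hq
          obtain rfl : p = 0 := Nat.le_zero.mp hpq
          exact subset_rfl
        · intro hle; exact absurd hle (by omega)
        · intro p hp; exact absurd hp (by omega)
        · intro p hp; exact absurd hp (by omega)
        · intro p hp1 hp2; exact absurd hp2 (by omega)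
        · exact mem_comp_self hr₁W0
      | succ j ihj =>
        intro hj1
        obtain ⟨x, D, c, r, hesc', hcoA, hcox, hcomp, hsub, hx0, hxD, hadj, hwit, hrD⟩ :=
          ihj (by omega)
        obtain ⟨z, hz⟩ : ∃ z, (j = 0 ∧ z = r) ∨
            (1 ≤ j ∧ z ∈ D (j-1) ∧ z ∉ D j ∧ G.Adj (x (j-1)) z ∧
              ∃ w, w ∈ D j ∧ G.Adj z w) := by
          rcases Nat.eq_zero_or_pos j with hj0 | hjpos
          · exact ⟨r, Or.inl ⟨hj0, rfl⟩⟩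
          · obtain ⟨z, w, h1, h2, h3, h4, h5⟩ := pick_level hjpos hcomp
              (hsub (j-1) j (by omega) (le_refl j)) (hwit j hjpos (le_refl j)) hrD
            exact ⟨z, Or.inr ⟨hjpos, h1, h2, h5, w, h3, h4⟩⟩
        have hijlt : A.length + j < n := by omega
        set ij : Fin n := ⟨A.length + j, hijlt⟩ with hij
        have hijval : (ij : ℕ) = A.length + j := rfl
        set S : Set (Fin n) := {i | (i:ℕ) < A.length + j} with hS
        have hijS : ij ∉ S := by
          intro hmem
          rw [hS] at hmem
          have : (ij:ℕ) < A.length + j := hmem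
          omega
        have hrtg := reach_update hconn S hijS c z
        obtain ⟨u', hu'W, hDj⟩ := hcomp j (le_refl j)
        have hP : ∀ u ∈ Aset ∪ x '' {q | q < j}, ∃ i ∈ S, c i = u := by
          rintro u (hu | ⟨q, hq, rfl⟩)
          · obtain ⟨i, hi1, hi2⟩ := hcoA u hu
            exact ⟨i, show (i:ℕ) < A.length + j by omega, hi2⟩
          · have hq2 : q < j := hq
            obtain ⟨i, hi1, hi2⟩ := hcox q hq2
            exact ⟨i, show (i:ℕ) < A.length + j by omega, hi2⟩
        have hclosure : ∀ v w', v ∈ D j → legalRob G v w' →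
            w' ∈ avoidS G (Aset ∪ x '' {q | q < j}) → w' ∈ D j := by
          intro v w' hv hleg hw'
          rw [hDj] at hv ⊢
          exact comp_extend_rob hv hleg hw'
        obtain ⟨r', hesc'', hr'D⟩ := esc_rtg hrtg hP hesc' hrD hclosure
        set x' : ℕ → V := Function.update x j z with hx'def
        set c' : Fin n → V := Function.update c ij z with hc'def
        have hx'eq : ∀ q, q ≠ j → x' q = x q := fun q hq => Function.update_of_ne hq z x
        have hx'j : x' j = z := Function.update_self j z x
        have hWc : ∀ p, p ≤ j → Wset G Aset x' p = Wset G Aset x p := by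
          intro p hp
          refine (Wset_congr ?_).symm
          intro q hq
          exact (hx'eq q (by omega)).symm
        set Dnew := comp G (Wset G Aset x' (j+1)) r' with hDnewdef
        set D' : ℕ → Set V := Function.update D (j+1) Dnew with hD'def
        have hD'eq : ∀ p, p ≠ j+1 → D' p = D p := fun p hp => Function.update_of_ne hp _ D
        have hD'j1 : D' (j+1) = Dnew := Function.update_self _ _ D
        have hcoordA' : ∀ u ∈ Aset, ∃ i : Fin n, (i:ℕ) < A.length ∧ c' i = u := by
          intro u hu
          obtain ⟨i, hi1, hi2⟩ := hcoA u hu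
          have hne : i ≠ ij := by
            intro he
            rw [he, hijval] at hi1
            omega
          exact ⟨i, hi1, by rw [hc'def, Function.update_of_ne hne]; exact hi2⟩
        have hcoordx' : ∀ p, p < j+1 → ∃ i : Fin n, (i:ℕ) = A.length + p ∧ c' i = x' p := by
          intro p hp
          by_cases hpj : p = j
          · subst hpj
            exact ⟨ij, hijval, by rw [hc'def, Function.update_self, hx'j]⟩
          · obtain ⟨i, hi1, hi2⟩ := hcox p (by omega)
            have hne : i ≠ ij := by
              intro he
              rw [he, hijval] at hi1
              omega
            exact ⟨i, hi1, by rw [hc'def, Function.update_of_ne hne, hi2, hx'eq p hpj]⟩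
        have hr'W : r' ∈ Wset G Aset x' (j+1) := by
          show r' ∈ avoidS G (Aset ∪ x' '' {q | q < j+1})
          apply esc_mem_avoid ?_ hesc''
          rintro u (hu | ⟨q, hq, rfl⟩)
          · obtain ⟨i, hi1, hi2⟩ := hcoordA' u hu
            exact ⟨i, hi2⟩
          · obtain ⟨i, hi1, hi2⟩ := hcoordx' q hq
            exact ⟨i, hi2⟩
        have hDnew_sub : Dnew ⊆ D j := by
          have hws : Wset G Aset x' (j+1) ⊆ Wset G Aset x j := by
            rw [← hWc j (le_refl j)]
            exact Wset_anti (by omega)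
          have hmm : r' ∈ comp G (Wset G Aset x j) u' := by rw [← hDj]; exact hr'D
          rw [hDnewdef, hDj]
          exact comp_mono hws hmm
        refine ⟨x', D', c', r', hesc'', hcoordA', hcoordx', ?_, ?_, ?_, ?_, ?_, ?_, ?_⟩
        · -- components
          intro p hp
          by_cases hpj : p = j + 1
          · subst hpj
            exact ⟨r', hr'W, by rw [hD'j1, hDnewdef]⟩
          · obtain ⟨u, hu1, hu2⟩ := hcomp p (by omega)
            exact ⟨u, by rw [hWc p (by omega)]; exact hu1,
              by rw [hD'eq p hpj, hWc p (by omega)]; exact hu2⟩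
        · -- nested
          intro p q hpq hq
          by_cases hqj : q = j + 1
          · subst hqj
            by_cases hpj : p = j + 1
            · subst hpj; exact subset_rfl
            · rw [hD'j1, hD'eq p hpj]
              exact subset_trans hDnew_sub (hsub p j (by omega) (le_refl j))
          · rw [hD'eq q hqj, hD'eq p (by omega)]
            exact hsub p q hpq (by omega)
        · -- x' 0 ∈ D' 0
          intro _
          rcases hz with ⟨hj0, hzr⟩ | ⟨hjpos, hzD, -, -, -⟩
          · have hx'0 : x' 0 = z := by rw [← hj0]; exact hx'j
            rw [hD'eq 0 (by omega), hx'0, hzr]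
            have := hrD
            rw [hj0] at this
            exact this
          · rw [hD'eq 0 (by omega), hx'eq 0 (by omega)]
            exact hx0 hjpos
        · -- x' (p+1) ∈ D' p
          intro p hp
          by_cases hpj : p + 1 = j
          · rcases hz with ⟨hj0, -⟩ | ⟨hjpos, hzD, -, -, -⟩
            · omega
            · rw [hD'eq p (by omega), hpj, hx'j]
              have hpe : p = j - 1 := by omega
              rw [hpe]
              exact hzD
          · rw [hD'eq p (by omega), hx'eq (p+1) hpj]
            exact hxD p (by omega)
        · -- consecutive adjacency
          intro p hp
          by_cases hpj : p + 1 = j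
          · rcases hz with ⟨hj0, -⟩ | ⟨hjpos, -, -, hzadj, -⟩
            · omega
            · rw [hpj, hx'j, hx'eq p (by omega)]
              have hpe : p = j - 1 := by omega
              rw [hpe]
              exact hzadj
          · rw [hx'eq p (by omega), hx'eq (p+1) hpj]
            exact hadj p (by omega)
        · -- witnesses
          intro p hp1 hp2
          by_cases hpj : p = j + 1
          · subst hpj
            rcases hz with ⟨hj0, hzr⟩ | ⟨hjpos, -, -, -, w, hwD, hzw⟩
            · refine ⟨z, ?_, Or.inl ?_⟩
              · rw [hD'eq (j+1-1) (by omega), show j+1-1 = j from by omega, hzr]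
                exact hrD
              · rw [show j+1-1 = j from by omega, hx'j]
            · refine ⟨w, ?_, Or.inr ?_⟩
              · rw [hD'eq (j+1-1) (by omega), show j+1-1 = j from by omega]
                exact hwD
              · rw [show j+1-1 = j from by omega, hx'j]
                exact hzw
          · obtain ⟨w, hw1, hw2⟩ := hwit p hp1 (by omega)
            refine ⟨w, ?_, ?_⟩
            · rw [hD'eq (p-1) (by omega)]
              exact hw1
            · rw [hx'eq (p-1) (by omega)]
              exact hw2
        · -- robber position
          rw [hD'j1, hDnewdef]
          exact mem_comp_self hr'W
    obtain ⟨x, D, c, r, hesc', hcoA, hcox, hcomp, hsub, hx0, hxD, hadj, hwit, hrD⟩ :=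
      stage (M-2) (le_refl _)
    have hM2 : 1 ≤ M - 2 := by omega
    obtain ⟨zf, wf, hzfD, hzfnD, hwfD, hzwf, hyzf⟩ := pick_level hM2 hcomp
      (hsub (M-2-1) (M-2) (by omega) (le_refl _)) (hwit (M-2) hM2 (le_refl _)) hrD
    set Y : ℕ → V := fun t => if t < M-2 then x t else if t = M-2 then zf else wf with hYdef
    have hY1 : ∀ t, t < M-2 → Y t = x t := by
      intro t ht
      show (if t < M-2 then x t else if t = M-2 then zf else wf) = x t
      rw [if_pos ht]
    have hY2 : Y (M-2) = zf := by
      show (if M-2 < M-2 then x (M-2) else if M-2 = M-2 then zf else wf) = zf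
      rw [if_neg (lt_irrefl _), if_pos rfl]
    have hY3 : Y (M-1) = wf := by
      show (if M-1 < M-2 then x (M-1) else if M-1 = M-2 then zf else wf) = wf
      rw [if_neg (by omega), if_neg (by omega)]
    have hDW : ∀ p, p ≤ M-2 → D p ⊆ Wset G Aset x p := by
      intro p hp
      obtain ⟨u, -, hDp⟩ := hcomp p hp
      rw [hDp]
      exact comp_subset
    have hmem : ∀ t, t ≤ M-1 → Y t ∈ D (t-1) := by
      intro t ht
      rcases show t < M-2 ∨ t = M-2 ∨ t = M-1 by omega with h | h | h
      · rw [hY1 t h]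
        rcases Nat.eq_zero_or_pos t with rfl | htpos
        · exact hx0 hM2
        · have hxx := hxD (t-1) (by omega)
          rw [show t-1+1 = t from by omega] at hxx
          exact hxx
      · rw [h, hY2]
        exact hzfD
      · rw [h, hY3, show M-1-1 = M-2 from by omega]
        exact hwfD
    have hconsec : ∀ t, t + 1 ≤ M-1 → G.Adj (Y t) (Y (t+1)) := by
      intro t ht
      rcases show t+1 < M-2 ∨ t+1 = M-2 ∨ t+1 = M-1 by omega with h | h | h
      · rw [hY1 t (by omega), hY1 (t+1) h]
        exact hadj t h
      · rw [hY1 t (by omega), show t+1 = M-2 from h, hY2, show t = M-2-1 from by omega]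
        exact hyzf
      · rw [show t+1 = M-1 from h, hY3, show t = M-2 from by omega, hY2]
        exact hzwf
    have hnon : ∀ (s t : ℕ), s + 2 ≤ t → t ≤ M-1 → Y t ≠ x s ∧ ¬ G.Adj (x s) (Y t) := by
      intro s t hst ht
      have h1 : Y t ∈ D (t-1) := hmem t ht
      have h2 : D (t-1) ⊆ Wset G Aset x (t-1) := hDW (t-1) (by omega)
      obtain ⟨-, hq⟩ := mem_Wset.mp (h2 h1)
      exact hq s (by omega)
    have hfar : ∀ (s t : ℕ), s + 2 ≤ t → t ≤ M-1 → Y t ≠ Y s ∧ ¬ G.Adj (Y s) (Y t) := by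
      intro s t hst ht
      have hs : s < M - 2 := by omega
      rw [hY1 s hs]
      exact hnon s t hst ht
    have havoid : ∀ t, t ≤ M-1 → ∀ b ∈ A, Y t ≠ b ∧ ¬ G.Adj (Y t) b := by
      intro t ht b hb
      obtain ⟨hA, -⟩ := mem_Wset.mp (hDW (t-1) (by omega) (hmem t ht))
      obtain ⟨hne, hnadj⟩ := hA b hb
      exact ⟨hne, fun hadj' => hnadj hadj'.symm⟩
    refine hforb (fun a => Y (a:ℕ)) ⟨?_, ?_⟩ ?_
    · intro a b he
      have he' : Y (a:ℕ) = Y (b:ℕ) := he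
      by_contra hne
      have hab : (a:ℕ) ≠ (b:ℕ) := fun h => hne (Fin.ext h)
      have haM := a.isLt
      have hbM := b.isLt
      rcases show (a:ℕ)+1 = (b:ℕ) ∨ (b:ℕ)+1 = (a:ℕ) ∨ (a:ℕ)+2 ≤ (b:ℕ) ∨ (b:ℕ)+2 ≤ (a:ℕ)
          by omega with h | h | h | h
      · have hadj' := hconsec (a:ℕ) (by omega)
        rw [h] at hadj'
        exact hadj'.ne he'
      · have hadj' := hconsec (b:ℕ) (by omega)
        rw [h] at hadj'
        exact hadj'.ne he'.symm
      · exact (hfar (a:ℕ) (b:ℕ) h (by omega)).1 he'.symm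
      · exact (hfar (b:ℕ) (a:ℕ) h (by omega)).1 he'
    · intro a b
      show G.Adj (Y (a:ℕ)) (Y (b:ℕ)) ↔ _
      have haM := a.isLt
      have hbM := b.isLt
      constructor
      · intro hadj'
        by_contra hcon
        push_neg at hcon
        obtain ⟨h1, h2⟩ := hcon
        rcases show (a:ℕ) = (b:ℕ) ∨ (a:ℕ)+2 ≤ (b:ℕ) ∨ (b:ℕ)+2 ≤ (a:ℕ) by omega with h | h | h
        · rw [h] at hadj'
          exact G.irrefl hadj'
        · exact (hfar (a:ℕ) (b:ℕ) h (by omega)).2 hadj'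
        · exact (hfar (b:ℕ) (a:ℕ) h (by omega)).2 hadj'.symm
      · rintro (h | h)
        · have hadj' := hconsec (a:ℕ) (by omega)
          rw [h] at hadj'
          exact hadj'
        · have hadj' := hconsec (b:ℕ) (by omega)
          rw [h] at hadj'
          exact hadj'.symm
    · intro a b hb
      exact havoid (a:ℕ) (by have := a.isLt; omega) b hb


end CoreMain

/-! ### Monotonicity in the number of cops, and the master theorem -/

section MasterSec
variable {V : Type*} {G : SimpleGraph V} {n : ℕ}

lemma attr_mono {m : ℕ} (hmn : m ≤ n) :
    ∀ {ct : Fin m → V} {r : V}, Attr G ct r → ∀ (c : Fin n → V),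
      (∀ j : Fin m, c (Fin.castLE hmn j) = ct j) → Attr G c r := by
  classical
  intro ct r h
  induction h with
  | caught c₁ r h =>
    intro c hc
    obtain ⟨i, hi⟩ := h
    refine Attr.caught c r ⟨Fin.castLE hmn i, ?_⟩
    rw [hc i]
    exact hi
  | touch c₁ r c₁' hleg h =>
    intro c hc
    obtain ⟨i, hi⟩ := h
    refine Attr.touch c r (fun i' => if h' : (i':ℕ) < m then c₁' ⟨(i':ℕ), h'⟩ else c i') ?_ ?_
    · intro i'
      by_cases h' : (i':ℕ) < m
      · simp only [dif_pos h']
        have h4 : c i' = c₁ ⟨(i':ℕ), h'⟩ := hc ⟨(i':ℕ), h'⟩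
        rcases hleg ⟨(i':ℕ), h'⟩ with h3 | h3
        · exact Or.inl (by rw [h3, h4])
        · exact Or.inr (by rw [h4]; exact h3)
      · simp only [dif_neg h']
        exact Or.inl trivial
    · refine ⟨Fin.castLE hmn i, ?_⟩
      simp only [dif_pos (show ((Fin.castLE hmn i : Fin n):ℕ) < m from i.isLt)]
      exact hi
  | pass c₁ r c₁' hleg h ih =>
    intro c hc
    refine Attr.pass c r (fun i' => if h' : (i':ℕ) < m then c₁' ⟨(i':ℕ), h'⟩ else c i') ?_ ?_
    · intro i'
      by_cases h' : (i':ℕ) < m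
      · simp only [dif_pos h']
        have h4 : c i' = c₁ ⟨(i':ℕ), h'⟩ := hc ⟨(i':ℕ), h'⟩
        rcases hleg ⟨(i':ℕ), h'⟩ with h3 | h3
        · exact Or.inl (by rw [h3, h4])
        · exact Or.inr (by rw [h4]; exact h3)
      · simp only [dif_neg h']
        exact Or.inl trivial
    · intro r' hr'
      refine ih r' hr' _ ?_
      intro j
      simp only [dif_pos (show ((Fin.castLE hmn j : Fin n):ℕ) < m from j.isLt)]
      rfl

def bnd (L : List ℕ) : ℕ := if L.any (fun y => 3 ≤ y) then L.sum - 2 else L.sum - 1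

lemma bnd_le (L : List ℕ) : bnd L ≤ L.sum - 1 := by
  unfold bnd
  split
  · omega
  · exact le_refl _

lemma exists_max_perm : ∀ (L : List ℕ), L ≠ [] →
    ∃ M L', L.Perm (M :: L') ∧ ∀ y ∈ L', y ≤ M := by
  intro L
  induction L with
  | nil => intro h; exact absurd rfl h
  | cons a L ih =>
    intro _
    rcases eq_or_ne L [] with rfl | hL
    · exact ⟨a, [], List.Perm.refl _, by simp⟩
    · obtain ⟨M, L', hperm, hbound⟩ := ih hL
      rcases le_or_gt a M with hle | hlt
      · refine ⟨M, a :: L', ?_, ?_⟩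
        · exact (hperm.cons a).trans (List.Perm.swap M a L')
        · intro y hy
          rcases List.mem_cons.mp hy with rfl | hy
          · exact hle
          · exact hbound y hy
      · refine ⟨a, L, List.Perm.refl _, ?_⟩
        intro y hy
        rcases List.mem_cons.mp (hperm.mem_iff.mp hy) with rfl | hy'
        · omega
        · exact le_trans (hbound y hy') (by omega)

lemma master (hconn : G.Connected) :
    ∀ (len : ℕ) (L : List ℕ), L.length ≤ len → L ≠ [] → (∀ y ∈ L, 1 ≤ y) →
      ¬ IndF G L Set.univ → ∀ (N : ℕ), bnd L ≤ N → ∀ (c : Fin N → V) (r : V), Attr G c r := by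
  intro len
  induction len with
  | zero =>
    intro L hlen hne
    exact absurd (List.length_eq_zero_iff.mp (by omega)) hne
  | succ len ih =>
    intro L hlen hne helem hfree N hn c r
    by_contra hesc
    obtain ⟨M, L', hperm, hmax⟩ := exists_max_perm L hne
    have hMem : M ∈ L := hperm.mem_iff.mpr (List.mem_cons_self)
    have hM1 : 1 ≤ M := helem M hMem
    have hsumL : L.sum = M + L'.sum := by
      rw [hperm.sum_eq]
      simp
    have hmax' : ∀ y ∈ L, y ≤ M := by
      intro y hy
      rcases List.mem_cons.mp (hperm.mem_iff.mp hy) with rfl | hy'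
      · exact le_refl _
      · exact hmax y hy'
    by_cases hcopy : IndF G L' Set.univ
    · -- a copy of the rest exists : park cops on it and run the path construction
      obtain ⟨A, hlenA, hext⟩ := indF_extend L' Set.univ hcopy
      have hforb : ∀ (X : Fin M → V), isPath G X →
          (∀ (a : Fin M), ∀ b ∈ A, X a ≠ b ∧ ¬ G.Adj (X a) b) → False := by
        intro X hX hav
        apply hfree
        refine indF_perm ((List.perm_append_singleton M L').trans hperm.symm) _ ?_
        exact hext M X hX (fun a => Set.mem_univ _) hav
      have hbudkey : A.length + (M - 2) ≤ N ∧ (M = 2 → A.length + 1 ≤ N) := by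
        by_cases h3 : L.any (fun y => 3 ≤ y)
        · have hb : bnd L = L.sum - 2 := by unfold bnd; rw [if_pos h3]
          obtain ⟨y, hy, hy3⟩ := List.any_eq_true.mp h3
          have hy3' : 3 ≤ y := of_decide_eq_true hy3
          have hM3 : 3 ≤ M := le_trans hy3' (hmax' y hy)
          constructor
          · omega
          · intro h2; omega
        · have hb : bnd L = L.sum - 1 := by unfold bnd; rw [if_neg h3]
          have hM2 : M ≤ 2 := by
            by_contra hM2
            exact h3 (List.any_eq_true.mpr ⟨M, hMem, decide_eq_true (by omega)⟩)
          constructor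
          · omega
          · intro h2; omega
      exact core hconn A M hM1 hbudkey.1 hbudkey.2 hforb c r hesc
    · -- recurse on the smaller forest
      have hL'len : L'.length ≤ len := by
        have := hperm.length_eq
        simp at this
        omega
      have hL'ne : L' ≠ [] := by
        intro h
        rw [h] at hcopy
        exact hcopy trivial
      have hL'elem : ∀ y ∈ L', 1 ≤ y :=
        fun y hy => helem y (hperm.mem_iff.mpr (List.mem_cons_of_mem M hy))
      have hL'sum1 : 1 ≤ L'.sum := by
        obtain ⟨y, hy⟩ := List.exists_mem_of_ne_nil L' hL'ne
        have := hL'elem y hy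
        have := List.single_le_sum (fun z _ => Nat.zero_le z) y hy
        omega
      have hbnd' : bnd L' ≤ N := by
        have h1 := bnd_le L'
        have h2 : bnd L ≤ N := hn
        have h3 : bnd L = L.sum - 2 ∨ bnd L = L.sum - 1 := by
          unfold bnd; split
          · exact Or.inl rfl
          · exact Or.inr rfl
        omega
      exact hesc (ih L' hL'len hL'ne hL'elem hcopy N hbnd' c r)

end MasterSec

end CR

theorem cop_number_of_pathsUnion_free {V : Type*} [Fintype V] (G : SimpleGraph V)
    (k : ℕ) (hk : 2 ≤ k) (i : Fin k → ℕ) (hi : ∀ j, 1 ≤ i j) (hi3 : ∃ j, 3 ≤ i j)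
    (hconn : G.Connected) (hfree : IsEmpty (pathsUnion i ↪g G)) :
    copNumber G ≤ (∑ j, i j) - 2 := by
  classical
  have hV : Nonempty V := hconn.nonempty
  have hLlen : (List.ofFn i).length = k := List.length_ofFn
  have hLne : (List.ofFn i) ≠ [] := by
    intro h
    rw [h] at hLlen
    simp at hLlen
    omega
  have helem : ∀ y ∈ List.ofFn i, 1 ≤ y := by
    intro y hy
    obtain ⟨j, rfl⟩ := List.mem_ofFn.mp hy
    exact hi j
  have hfree' : ¬ CR.IndF G (List.ofFn i) Set.univ := by
    intro h
    obtain ⟨f, hfW, hinj, hiff⟩ := CR.indF_ofFn i Set.univ h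
    exact hfree.elim' ⟨⟨f, hinj⟩, fun {p q} => hiff p q⟩
  have hsum : (List.ofFn i).sum = ∑ j, i j := List.sum_ofFn
  have hbndL : CR.bnd (List.ofFn i) = (∑ j, i j) - 2 := by
    unfold CR.bnd
    rw [if_pos, hsum]
    obtain ⟨j, hj⟩ := hi3
    exact List.any_eq_true.mpr ⟨i j, List.mem_ofFn.mpr ⟨j, rfl⟩, decide_eq_true hj⟩
  have hattr := CR.master hconn (List.ofFn i).length (List.ofFn i) (le_refl _) hLne helem
    hfree' ((∑ j, i j) - 2) (le_of_eq hbndL)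
  apply Nat.sInf_le
  exact CR.copWinWith_of_attr G (fun c r => hattr c r)
end

section
/- For every integer k ≥ 3, if a finite connected graph G contains no induced subgraph isomorphic to the disjoint union of an isolated vertex and a path on k vertices (P_1 + P_k), then the cop number of G is at most k − 1. -/
open SimpleGraph

namespace CnR


open Classical

variable {V : Type*} (G : SimpleGraph V)

def Nb (u x : V) : Prop := x = u ∨ G.Adj u x

def Stp (B : Set V) (x y : V) : Prop := G.Adj x y ∧ x ∉ B ∧ y ∉ B

def Reach (B : Set V) (r : V) : Set V := {v | Relation.ReflTransGen (Stp G B) r v}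

/-- `Bset f j` : union of closed neighborhoods of the first `j` posts `f 0, …, f (j-1)`. -/
def Bset (f : ℕ → V) (j : ℕ) : Set V := {x | ∃ i < j, Nb G (f i) x}

lemma bset_mono (f : ℕ → V) {j j' : ℕ} (h : j ≤ j') : Bset G f j ⊆ Bset G f j' := by
  intro x ⟨i, hi, hnb⟩
  exact ⟨i, lt_of_lt_of_le hi h, hnb⟩

lemma bset_congr {f g : ℕ → V} (j : ℕ) (h : ∀ i < j, f i = g i) :
    Bset G f j = Bset G g j := by
  ext x
  constructor <;> rintro ⟨i, hi, hnb⟩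
  · exact ⟨i, hi, h i hi ▸ hnb⟩
  · exact ⟨i, hi, (h i hi).symm ▸ hnb⟩

/-- candidate set for the next post (to be placed with index `j+1`):
adjacent to post `j`, outside the closed neighborhoods of posts `0..j-1`,
and with a neighbor in the current robber territory (reachability avoiding
the first `j+1` posts). -/
def doorSet (f : ℕ → V) (j : ℕ) (r : V) : Set V :=
  {x | G.Adj (f j) x ∧ x ∉ Bset G f j ∧ ∃ t, t ∈ Reach G (Bset G f (j + 1)) r ∧ G.Adj x t}

lemma doorSet_congr {f g : ℕ → V} (j : ℕ) (r : V) (h : ∀ i < j + 1, f i = g i) :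
    doorSet G f j r = doorSet G g j r := by
  have hB : Bset G f j = Bset G g j := bset_congr G j (fun i hi => h i (by omega))
  have hB1 : Bset G f (j+1) = Bset G g (j+1) := bset_congr G (j+1) h
  unfold doorSet
  rw [hB, hB1, h j (by omega)]

noncomputable def pick (s : Set V) (d : V) : V := if h : s.Nonempty then h.some else d

lemma pick_mem {s : Set V} {d : V} (h : s.Nonempty) : pick s d ∈ s := by
  unfold pick
  rw [dif_pos h]
  exact h.some_mem

variable (u₀ : V)

noncomputable def pu (r : V) : ℕ → V
  | 0 => u₀
  | j + 1 => pick (doorSet G (fun i => if _h : i < j + 1 then pu r i else u₀) j r) u₀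

lemma pu_zero (r : V) : pu G u₀ r 0 = u₀ := by unfold pu; rfl

lemma pu_succ (r : V) (j : ℕ) :
    pu G u₀ r (j + 1) = pick (doorSet G (pu G u₀ r) j r) u₀ := by
  rw [pu]
  congr 1
  apply doorSet_congr
  intro i hi
  rw [dif_pos hi]


lemma mem_bset {f : ℕ → V} {j : ℕ} {x : V} :
    x ∈ Bset G f j ↔ ∃ i < j, Nb G (f i) x := Iff.rfl

lemma bset_le {f : ℕ → V} {j j' : ℕ} {x : V} (hjj : j ≤ j') (h : x ∈ Bset G f j) :
    x ∈ Bset G f j' := by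
  obtain ⟨i, hi, hnb⟩ := h
  exact ⟨i, by omega, hnb⟩

lemma not_bset_le {f : ℕ → V} {j j' : ℕ} {x : V} (hjj : j ≤ j') (h : x ∉ Bset G f j') :
    x ∉ Bset G f j := fun hh => h (bset_le G hjj hh)

lemma reach_refl' (B : Set V) (r : V) : r ∈ Reach G B r := Relation.ReflTransGen.refl

lemma reach_avoid' {B : Set V} {r v : V} (hr : r ∉ B) (h : v ∈ Reach G B r) : v ∉ B := by
  rcases (Relation.ReflTransGen.cases_tail h) with h' | ⟨w, _, hst⟩
  · exact h' ▸ hr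
  · exact hst.2.2

lemma reach_symm_aux {B : Set V} {a b : V} (h : Relation.ReflTransGen (Stp G B) a b) :
    Relation.ReflTransGen (Stp G B) b a := by
  induction h with
  | refl => exact Relation.ReflTransGen.refl
  | tail _ hst ih =>
      exact Relation.ReflTransGen.trans
        (Relation.ReflTransGen.single ⟨hst.1.symm, hst.2.2, hst.2.1⟩) ih

lemma reach_comm {B : Set V} {r r' : V} (h : r' ∈ Reach G B r) :
    Reach G B r = Reach G B r' := by
  ext v
  constructor
  · intro hv
    exact Relation.ReflTransGen.trans (reach_symm_aux G h) hv
  · intro hv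
    exact Relation.ReflTransGen.trans h hv

/-- crossing lemma -/
lemma reach_cross {B B' : Set V} {r v : V} (hr : r ∉ B')
    (hv : Relation.ReflTransGen (Stp G B) r v) :
    v ∈ Reach G B' r ∨
      ∃ x t, x ∈ B' ∧ x ∉ B ∧ t ∉ B' ∧ t ∈ Reach G B' r ∧ G.Adj t x := by
  induction hv with
  | refl => exact Or.inl (reach_refl' G B' r)
  | tail hchain hst ih =>
      rename_i w v'
      rcases ih with hw | ⟨x, t, h1, h2, h3, h4, h5⟩
      · by_cases hvB : v' ∈ B'
        · exact Or.inr ⟨v', w, hvB, hst.2.2, reach_avoid' G hr hw, hw, hst.1⟩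
        · exact Or.inl (Relation.ReflTransGen.tail hw ⟨hst.1, reach_avoid' G hr hw, hvB⟩)
      · exact Or.inr ⟨x, t, h1, h2, h3, h4, h5⟩

lemma doorSet_congr_r {f : ℕ → V} {j : ℕ} {r r' : V}
    (h : Reach G (Bset G f (j+1)) r = Reach G (Bset G f (j+1)) r') :
    doorSet G f j r = doorSet G f j r' := by
  unfold doorSet
  rw [h]

variable (hconn : G.Connected)

include hconn in
/-- key existence lemma for doors -/
lemma door_nonempty (r : V) : ∀ (j : ℕ), r ∉ Bset G (pu G u₀ r) (j+1) →
    (doorSet G (pu G u₀ r) j r).Nonempty := by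
  intro j
  induction j with
  | zero =>
      intro hr
      have hchain : Relation.ReflTransGen (Stp G (∅ : Set V)) r (pu G u₀ r 0) := by
        have h2 : Relation.ReflTransGen G.Adj r (pu G u₀ r 0) := by
          rw [← SimpleGraph.reachable_iff_reflTransGen]
          exact hconn.preconnected r (pu G u₀ r 0)
        exact Relation.ReflTransGen.mono
          (fun x y (hxy : G.Adj x y) => (⟨hxy, Set.notMem_empty x, Set.notMem_empty y⟩ : Stp G ∅ x y)) _ _ h2
      rcases reach_cross G (B' := Bset G (pu G u₀ r) 1) hr hchain with hleft | hright
      · exact absurd ⟨0, by omega, Or.inl rfl⟩ (reach_avoid' G hr hleft)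
      · obtain ⟨x, t, hxB', _, htB', htR, hadj⟩ := hright
        obtain ⟨i, hi, hnb⟩ := hxB'
        interval_cases i
        rcases hnb with heq | hadj0
        · exfalso
          apply htB'
          refine ⟨0, by omega, Or.inr ?_⟩
          rw [heq] at hadj
          exact hadj.symm
        · exact ⟨x, hadj0, by rintro ⟨i, hi, -⟩; omega, t, htR, hadj.symm⟩
  | succ j IH =>
      intro hr
      have hrj : r ∉ Bset G (pu G u₀ r) (j+1) := not_bset_le G (by omega) hr
      have hd := pick_mem (d := u₀) (IH hrj)
      rw [← pu_succ] at hd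
      obtain ⟨hd1, hd2, t₀, ht₀R, ht₀a⟩ := hd
      have ht₀B' : t₀ ∈ Bset G (pu G u₀ r) (j+2) := ⟨j+1, by omega, Or.inr ht₀a⟩
      rcases reach_cross G (B' := Bset G (pu G u₀ r) (j+2)) hr ht₀R with hleft | hright
      · exact absurd ht₀B' (reach_avoid' G hr hleft)
      · obtain ⟨x, t, hxB', hxB, htB', htR, hadj⟩ := hright
        obtain ⟨i, hi, hnb⟩ := hxB'
        have hij : i = j + 1 := by
          by_contra hne
          exact hxB ⟨i, by omega, hnb⟩
        subst hij
        rcases hnb with heq | hadjd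
        · exfalso
          apply hxB
          refine ⟨j, by omega, Or.inr ?_⟩
          rw [heq]
          exact hd1
        · exact ⟨x, hadjd, hxB, t, htR, hadj.symm⟩

include hconn in
lemma post_spec {r : V} {j : ℕ} (hr : r ∉ Bset G (pu G u₀ r) (j+1)) :
    pu G u₀ r (j+1) ∈ doorSet G (pu G u₀ r) j r := by
  rw [pu_succ]
  exact pick_mem (door_nonempty G u₀ hconn r j hr)

include hconn in
lemma post_adj {r : V} {j : ℕ} (hr : r ∉ Bset G (pu G u₀ r) (j+1)) :
    G.Adj (pu G u₀ r j) (pu G u₀ r (j+1)) := (post_spec G u₀ hconn hr).1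

include hconn in
lemma post_out {r : V} {j : ℕ} (hr : r ∉ Bset G (pu G u₀ r) (j+1)) :
    pu G u₀ r (j+1) ∉ Bset G (pu G u₀ r) j := (post_spec G u₀ hconn hr).2.1

include hconn in
/-- non-adjacency (and distinctness) of non-consecutive posts -/
lemma post_noadj {r : V} {J i j : ℕ} (hr : r ∉ Bset G (pu G u₀ r) J)
    (h1 : i + 1 < j) (h2 : j ≤ J) : ¬ Nb G (pu G u₀ r i) (pu G u₀ r j) := by
  intro hnb
  obtain ⟨jj, rfl⟩ : ∃ jj, j = jj + 1 := ⟨j - 1, by omega⟩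
  have hrj : r ∉ Bset G (pu G u₀ r) (jj+1) := not_bset_le G (by omega) hr
  exact post_out G u₀ hconn hrj ⟨i, by omega, hnb⟩

include hconn in
/-- stability of the posts under a robber move that stays clear of the
neighborhoods of the first `J` posts -/
lemma pu_stable {r r' : V} {J : ℕ} (hadj : G.Adj r r')
    (h : r ∉ Bset G (pu G u₀ r) J) (h' : r' ∉ Bset G (pu G u₀ r) J) :
    ∀ i ≤ J, pu G u₀ r' i = pu G u₀ r i := by
  intro i
  induction i using Nat.strong_induction_on with
  | _ i IH =>
    match i with
    | 0 => intro _; rw [pu_zero, pu_zero]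
    | i + 1 =>
        intro hiJ
        have hpre : ∀ ℓ < i + 1, pu G u₀ r' ℓ = pu G u₀ r ℓ :=
          fun ℓ hℓ => IH ℓ hℓ (by omega)
        rw [pu_succ, pu_succ, doorSet_congr G i r' hpre]
        congr 1
        apply doorSet_congr_r
        have hmem : r' ∈ Reach G (Bset G (pu G u₀ r) (i+1)) r := by
          apply Relation.ReflTransGen.single
          exact ⟨hadj, not_bset_le G (by omega) h, not_bset_le G (by omega) h'⟩
        exact (reach_comm G hmem).symm





/-- From `(P1 + Pk)`-freeness: there is no induced path on `k` vertices together with a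
vertex having no neighbor on it. -/
lemma no_P1_Pk {k : ℕ} (hfree : IsEmpty ((pathGraph 1 ⊕g pathGraph k) ↪g G))
    (p : Fin k → V) (z : V)
    (hchain : ∀ i j : Fin k, i.val + 1 = j.val → G.Adj (p i) (p j))
    (hind : ∀ i j : Fin k, i.val + 1 < j.val → ¬ Nb G (p i) (p j))
    (hz : ∀ i, ¬ Nb G (p i) z) : False := by
  have adjiff : ∀ i j : Fin k, G.Adj (p i) (p j) ↔ (i.val + 1 = j.val ∨ j.val + 1 = i.val) := by
    intro i j
    constructor
    · intro hadj
      by_contra hcon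
      push_neg at hcon
      rcases Nat.lt_trichotomy i.val j.val with hlt | heq | hgt
      · have : i.val + 1 < j.val := by omega
        exact hind i j this (Or.inr hadj)
      · exact G.irrefl (by rwa [show i = j from Fin.ext heq] at hadj)
      · have : j.val + 1 < i.val := by omega
        exact hind j i this (Or.inr hadj.symm)
    · rintro (h | h)
      · exact hchain i j h
      · exact (hchain j i h).symm
  have pinj : Function.Injective p := by
    intro i j hij
    by_contra hne
    rcases Nat.lt_trichotomy i.val j.val with hlt | heq | hgt
    · rcases Nat.lt_or_ge (i.val + 1) j.val with h | h
      · exact hind i j h (Or.inl hij.symm)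
      · have : i.val + 1 = j.val := by omega
        exact G.irrefl (hij ▸ hchain i j this)
    · exact hne (Fin.ext heq)
    · rcases Nat.lt_or_ge (j.val + 1) i.val with h | h
      · exact hind j i h (Or.inl hij)
      · have : j.val + 1 = i.val := by omega
        exact G.irrefl (hij ▸ (hchain j i this).symm)
  apply hfree.false
  refine ⟨⟨Sum.elim (fun _ => z) p, ?_⟩, ?_⟩
  · rintro (a | a) (b | b) hab
    · exact congrArg Sum.inl (Subsingleton.elim a b)
    · exact absurd (Or.inl (show z = p b from hab)) (hz b)
    · exact absurd (Or.inl (show z = p a from hab.symm)) (hz a)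
    · exact congrArg Sum.inr (pinj hab)
  · rintro (a | a) (b | b)
    · simp only [Sum.elim_inl, sum_adj]
      constructor
      · intro h; exact absurd h G.irrefl
      · intro h
        rw [Subsingleton.elim a b] at h
        exact absurd h (pathGraph 1).irrefl
    · simp only [Sum.elim_inl, Sum.elim_inr, sum_adj]
      constructor
      · intro h; exact absurd (Or.inr h.symm) (hz b)
      · intro h; exact h.elim
    · simp only [Sum.elim_inl, Sum.elim_inr, sum_adj]
      constructor
      · intro h; exact absurd (Or.inr h) (hz a)
      · intro h; exact h.elim
    · simp only [Sum.elim_inr, sum_adj, pathGraph_adj]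
      exact adjiff a b

section GameGeneric
variable {n : ℕ}




def Thr (c : Fin n → V) (r : V) : Prop := ∃ i, Nb G (c i) r

lemma seq_succ_fst (init : Fin n → V) (F : (Fin n → V) → V → (Fin n → V))
    (rob : (Fin n → V) → V → V) (r₀ : V) (t : ℕ) :
    (copsRobberSeq init F rob r₀ (t+1)).1
      = F (copsRobberSeq init F rob r₀ t).1 (copsRobberSeq init F rob r₀ t).2 := rfl

lemma seq_succ_snd (init : Fin n → V) (F : (Fin n → V) → V → (Fin n → V))
    (rob : (Fin n → V) → V → V) (r₀ : V) (t : ℕ) :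
    (copsRobberSeq init F rob r₀ (t+1)).2
      = rob ((copsRobberSeq init F rob r₀ (t+1)).1) (copsRobberSeq init F rob r₀ t).2 := rfl

/-- Master lemma: a strategy together with an invariant and a decreasing measure
captures the robber. -/
lemma capture_master
    (init : Fin n → V) (F : (Fin n → V) → V → (Fin n → V))
    (Good : (Fin n → V) → V → Prop) (μ : (Fin n → V) → V → ℕ)
    (hland : ∀ c r, Thr G c r → ∃ i, F c r i = r)
    (hstep : ∀ c r r', Good c r → ¬ Thr G c r → (r' = r ∨ G.Adj r r') →
        Thr G (F c r) r' ∨ (Good (F c r) r' ∧ μ (F c r) r' < μ c r))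
    (r₀ : V) (rob : (Fin n → V) → V → V)
    (hrob : ∀ c r, rob c r = r ∨ G.Adj r (rob c r))
    (hinit : Thr G init r₀ ∨ Good init r₀) :
    ∃ t, (∃ i, (copsRobberSeq init F rob r₀ t).1 i = (copsRobberSeq init F rob r₀ t).2) ∨
         (∃ i, (copsRobberSeq init F rob r₀ (t+1)).1 i = (copsRobberSeq init F rob r₀ t).2) := by
  set seq := copsRobberSeq init F rob r₀ with hseq
  have hthr : ∀ t, Thr G (seq t).1 (seq t).2 → ∃ t', (∃ i, (seq t').1 i = (seq t').2) ∨
      (∃ i, (seq (t'+1)).1 i = (seq t').2) := by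
    intro t ht
    obtain ⟨i, hi⟩ := hland (seq t).1 (seq t).2 ht
    exact ⟨t, Or.inr ⟨i, by rw [hseq, seq_succ_fst]; exact hi⟩⟩
  have main : ∀ M t, Good (seq t).1 (seq t).2 → μ (seq t).1 (seq t).2 ≤ M →
      ∃ t', (∃ i, (seq t').1 i = (seq t').2) ∨ (∃ i, (seq (t'+1)).1 i = (seq t').2) := by
    intro M
    induction M using Nat.strong_induction_on with
    | _ M IH =>
      intro t hGood hμ
      by_cases ht : Thr G (seq t).1 (seq t).2
      · exact hthr t ht
      · have hrts := hrob ((seq (t+1)).1) (seq t).2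
        have hr' : (seq (t+1)).2 = (seq t).2 ∨ G.Adj (seq t).2 (seq (t+1)).2 := by
          rw [hseq, seq_succ_snd]
          exact hrts
        have hst := hstep (seq t).1 (seq t).2 (seq (t+1)).2 hGood ht hr'
        rw [← seq_succ_fst init F rob r₀ t] at hst
        rcases hst with hthr1 | ⟨hGood1, hlt⟩
        · exact hthr t.succ hthr1
        · rw [← hseq] at hGood1 hlt
          rcases Nat.eq_zero_or_pos M with rfl | hM
          · omega
          · exact IH (M-1) (by omega) (t+1) hGood1 (by omega)
  rcases hinit with h | h
  · exact hthr 0 h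
  · exact main (μ init r₀) 0 h (le_refl _)

end GameGeneric

section Strategy

attribute [local instance] Classical.propDecidable

variable (N : ℕ)

/-- Pattern: posts `0..j-1` are manned, the walking cop `j` stands on post `m < j`,
cops with index `> j` wait at `u₀`, and the robber avoids the closed neighborhoods
of the manned posts. -/
def PatP (c : Fin (N+2) → V) (r : V) (j m : ℕ) : Prop :=
  1 ≤ j ∧ j ≤ N+1 ∧ m < j ∧
  (∀ i : Fin (N+2), i.val < j → c i = pu G u₀ r i.val) ∧
  (∀ i : Fin (N+2), j < i.val → c i = u₀) ∧
  (∀ hj : j < N+2, c ⟨j, hj⟩ = pu G u₀ r m) ∧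
  r ∉ Bset G (pu G u₀ r) j

/-- Pattern: all `N+2` posts are manned. -/
def PatM0 (c : Fin (N+2) → V) (r : V) : Prop :=
  (∀ i : Fin (N+2), c i = pu G u₀ r i.val) ∧ r ∉ Bset G (pu G u₀ r) (N+2)

/-- Endgame pattern: posts `0..N` manned, the last cop stands on a "door" `δ`,
and the robber sits in the escape zone `E`. -/
def PatM1 (c : Fin (N+2) → V) (r : V) : Prop :=
  (∀ i : Fin (N+2), i.val < N+1 → c i = pu G u₀ r i.val) ∧
  G.Adj (c (Fin.last (N+1))) (pu G u₀ r (N+1)) ∧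
  c (Fin.last (N+1)) ∉ Bset G (pu G u₀ r) (N+1) ∧
  Nb G (pu G u₀ r (N+1)) r ∧
  ¬ Nb G (c (Fin.last (N+1))) r ∧
  r ∉ Bset G (pu G u₀ r) (N+1)

def GoodS (c : Fin (N+2) → V) (r : V) : Prop :=
  PatM1 G u₀ N c r ∨ PatM0 G u₀ N c r ∨ ∃ j m, PatP G u₀ N c r j m

noncomputable def Fstrat (c : Fin (N+2) → V) (r : V) : Fin (N+2) → V :=
  if h : Thr G c r then Function.update c h.choose r
  else if PatM1 G u₀ N c r then Function.update c ⟨N, by omega⟩ (pu G u₀ r (N+1))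
  else if PatM0 G u₀ N c r then Function.update c (Fin.last (N+1)) (pu G u₀ r (N+2))
  else if h : ∃ j m, PatP G u₀ N c r j m then
    Function.update c ⟨h.choose, by
      have := h.choose_spec.choose_spec.2.1; omega⟩ (pu G u₀ r (h.choose_spec.choose + 1))
  else c

noncomputable def muS (c : Fin (N+2) → V) (r : V) : ℕ :=
  if PatM1 G u₀ N c r then 1 else if PatM0 G u₀ N c r then 2
  else sInf {v | ∃ j m, PatP G u₀ N c r j m ∧ v = 3 + (N + 2 - j) * (N + 5) + (j - m)}

include hconn in
lemma post_ne {r : V} {J a b : ℕ} (hr : r ∉ Bset G (pu G u₀ r) J)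
    (hab : a < b) (hbJ : b ≤ J) : pu G u₀ r a ≠ pu G u₀ r b := by
  rcases Nat.lt_or_ge (a+1) b with h | h
  · intro heq
    exact post_noadj G u₀ hconn hr h hbJ (Or.inl heq.symm)
  · have hb : b = a + 1 := by omega
    subst hb
    exact (post_adj G u₀ hconn (not_bset_le G hbJ hr)).ne

include hconn in
lemma patP_unique {c : Fin (N+2) → V} {r : V} {j m j' m' : ℕ}
    (h : PatP G u₀ N c r j m) (h' : PatP G u₀ N c r j' m') : j = j' ∧ m = m' := by
  obtain ⟨hj1, hjN, hmj, hpost, htrail, hmwit, hrB⟩ := h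
  obtain ⟨hj1', hjN', hmj', hpost', htrail', hmwit', hrB'⟩ := h'
  have hjj : j = j' := by
    by_contra hne
    rcases Nat.lt_or_ge j j' with hlt | hge
    · -- j < j' : cop j is posted per h', but h says it is at post m < j
      have h1 : c ⟨j, by omega⟩ = pu G u₀ r j := hpost' ⟨j, by omega⟩ hlt
      have h2 : c ⟨j, by omega⟩ = pu G u₀ r m := hmwit (by omega)
      exact post_ne G u₀ hconn hrB' hmj (le_of_lt hlt) (h2.symm.trans h1)
    · have hlt : j' < j := by omega
      have h1 : c ⟨j', by omega⟩ = pu G u₀ r j' := hpost ⟨j', by omega⟩ hlt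
      have h2 : c ⟨j', by omega⟩ = pu G u₀ r m' := hmwit' (by omega)
      exact post_ne G u₀ hconn hrB hmj' (le_of_lt hlt) (h2.symm.trans h1)
  subst hjj
  refine ⟨rfl, ?_⟩
  by_contra hne
  have h2 : pu G u₀ r m = pu G u₀ r m' := by
    rw [← hmwit (by omega), ← hmwit' (by omega)]
  rcases Nat.lt_or_ge m m' with hlt | hge
  · exact post_ne G u₀ hconn hrB hlt (by omega) h2
  · exact post_ne G u₀ hconn hrB (show m' < m by omega) (by omega) h2.symm

lemma F_of_thr {c : Fin (N+2) → V} {r : V} (h : Thr G c r) :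
    ∃ i, Fstrat G u₀ N c r i = r := by
  refine ⟨h.choose, ?_⟩
  unfold Fstrat
  rw [dif_pos h]
  exact Function.update_self _ _ _

lemma F_of_M1 {c : Fin (N+2) → V} {r : V} (hn : ¬ Thr G c r) (h1 : PatM1 G u₀ N c r) :
    Fstrat G u₀ N c r = Function.update c ⟨N, by omega⟩ (pu G u₀ r (N+1)) := by
  unfold Fstrat
  rw [dif_neg hn, if_pos h1]

lemma F_of_M0 {c : Fin (N+2) → V} {r : V} (hn : ¬ Thr G c r) (h1 : ¬ PatM1 G u₀ N c r)
    (h0 : PatM0 G u₀ N c r) :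
    Fstrat G u₀ N c r = Function.update c (Fin.last (N+1)) (pu G u₀ r (N+2)) := by
  unfold Fstrat
  rw [dif_neg hn, if_neg h1, if_pos h0]

include hconn in
lemma F_of_P {c : Fin (N+2) → V} {r : V} (hn : ¬ Thr G c r) (h1 : ¬ PatM1 G u₀ N c r)
    (h0 : ¬ PatM0 G u₀ N c r) {j m : ℕ} (hp : PatP G u₀ N c r j m) :
    Fstrat G u₀ N c r = Function.update c ⟨j, by have := hp.2.1; omega⟩ (pu G u₀ r (m + 1)) := by
  have hE : ∃ j m, PatP G u₀ N c r j m := ⟨j, m, hp⟩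
  unfold Fstrat
  rw [dif_neg hn, if_neg h1, if_neg h0, dif_pos hE]
  have he := patP_unique G u₀ hconn N hE.choose_spec.choose_spec hp
  rw [he.2]
  simp only [he.1]

lemma mu_of_M1 {c : Fin (N+2) → V} {r : V} (h1 : PatM1 G u₀ N c r) :
    muS G u₀ N c r = 1 := by
  unfold muS
  rw [if_pos h1]

lemma mu_of_M0 {c : Fin (N+2) → V} {r : V} (h1 : ¬ PatM1 G u₀ N c r)
    (h0 : PatM0 G u₀ N c r) : muS G u₀ N c r = 2 := by
  unfold muS
  rw [if_neg h1, if_pos h0]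

include hconn in
lemma mu_of_P {c : Fin (N+2) → V} {r : V} (h1 : ¬ PatM1 G u₀ N c r)
    (h0 : ¬ PatM0 G u₀ N c r) {j m : ℕ} (hp : PatP G u₀ N c r j m) :
    muS G u₀ N c r = 3 + (N + 2 - j) * (N + 5) + (j - m) := by
  unfold muS
  rw [if_neg h1, if_neg h0]
  have hset : {v | ∃ j' m', PatP G u₀ N c r j' m' ∧
      v = 3 + (N + 2 - j') * (N + 5) + (j' - m')} =
      {3 + (N + 2 - j) * (N + 5) + (j - m)} := by
    ext v
    constructor
    · rintro ⟨j', m', hp', rfl⟩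
      have he := patP_unique G u₀ hconn N hp' hp
      rw [he.1, he.2]
      rfl
    · rintro rfl
      exact ⟨j, m, hp, rfl⟩
  rw [hset, csInf_singleton]

include hconn in
lemma mu_le_of_P {c : Fin (N+2) → V} {r : V} {j m : ℕ} (hp : PatP G u₀ N c r j m) :
    muS G u₀ N c r ≤ 3 + (N + 2 - j) * (N + 5) + (j - m) := by
  by_cases h1 : PatM1 G u₀ N c r
  · rw [mu_of_M1 G u₀ N h1]; omega
  by_cases h0 : PatM0 G u₀ N c r
  · rw [mu_of_M0 G u₀ N h1 h0]; omega
  rw [mu_of_P G u₀ hconn N h1 h0 hp]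

lemma mu_le_of_M0 {c : Fin (N+2) → V} {r : V} (h0 : PatM0 G u₀ N c r) :
    muS G u₀ N c r ≤ 2 := by
  by_cases h1 : PatM1 G u₀ N c r
  · rw [mu_of_M1 G u₀ N h1]; omega
  · rw [mu_of_M0 G u₀ N h1 h0]

include hconn in
lemma F_legal : ∀ (c : Fin (N+2) → V) (r : V) (i : Fin (N+2)),
    Fstrat G u₀ N c r i = c i ∨ G.Adj (c i) (Fstrat G u₀ N c r i) := by
  intro c r i
  by_cases h : Thr G c r
  · obtain ⟨_, hup⟩ : ∃ h' : Thr G c r, Fstrat G u₀ N c r = Function.update c h'.choose r := by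
      refine ⟨h, ?_⟩
      unfold Fstrat
      rw [dif_pos h]
    rw [hup]
    rcases eq_or_ne i (Exists.choose h) with rfl | hne
    · rcases h.choose_spec with heq | hadj
      · left
        rw [Function.update_self]
        exact heq
      · right
        rw [Function.update_self]
        exact hadj
    · left
      exact Function.update_of_ne hne _ _
  by_cases h1 : PatM1 G u₀ N c r
  · rw [F_of_M1 G u₀ N h h1]
    rcases eq_or_ne i ⟨N, by omega⟩ with rfl | hne
    · right
      rw [Function.update_self]
      have hc : c ⟨N, by omega⟩ = pu G u₀ r N :=
        h1.1 ⟨N, by omega⟩ (by exact Nat.lt_succ_self N)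
      rw [hc]
      exact post_adj G u₀ hconn h1.2.2.2.2.2
    · left
      exact Function.update_of_ne hne _ _
  by_cases h0 : PatM0 G u₀ N c r
  · rw [F_of_M0 G u₀ N h h1 h0]
    rcases eq_or_ne i (Fin.last (N+1)) with rfl | hne
    · right
      rw [Function.update_self]
      have hc : c (Fin.last (N+1)) = pu G u₀ r (N+1) := by
        have := h0.1 (Fin.last (N+1))
        rwa [Fin.val_last] at this
      rw [hc]
      exact post_adj G u₀ hconn h0.2
    · left
      exact Function.update_of_ne hne _ _
  by_cases hp : ∃ j m, PatP G u₀ N c r j m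
  · obtain ⟨j, m, hjm⟩ := hp
    rw [F_of_P G u₀ hconn N h h1 h0 hjm]
    rcases eq_or_ne i ⟨j, by have := hjm.2.1; omega⟩ with rfl | hne
    · right
      rw [Function.update_self]
      have hc : c ⟨j, by have := hjm.2.1; omega⟩ = pu G u₀ r m :=
        hjm.2.2.2.2.2.1 (by have := hjm.2.1; omega)
      rw [hc]
      exact post_adj G u₀ hconn
        (not_bset_le G (by have := hjm.2.2.1; omega) hjm.2.2.2.2.2.2)
    · left
      exact Function.update_of_ne hne _ _
  · left
    unfold Fstrat
    rw [dif_neg h, if_neg h1, if_neg h0, dif_neg hp]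

lemma nb_symm {u x : V} (h : Nb G u x) : Nb G x u := by
  rcases h with h | h
  · exact Or.inl h.symm
  · exact Or.inr h.symm

include hconn in
lemma dominating (hfree : IsEmpty ((pathGraph 1 ⊕g pathGraph (N+3)) ↪g G))
    {r : V} (hr : r ∉ Bset G (pu G u₀ r) (N+2)) (z : V) :
    ∃ i ≤ N+2, Nb G (pu G u₀ r i) z := by
  by_contra hcon
  push_neg at hcon
  apply no_P1_Pk G hfree (fun i : Fin (N+3) => pu G u₀ r i.val) z
  · intro i j hij
    have hjL := j.isLt
    have h := post_adj G u₀ hconn (not_bset_le G (show i.val+1 ≤ N+2 by omega) hr)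
    rw [← hij]
    exact h
  · intro i j hij
    have hjL := j.isLt
    exact post_noadj G u₀ hconn hr hij (by omega)
  · intro i
    have hiL := i.isLt
    exact hcon i.val (by omega)

include hconn in
/-- Endgame: from pattern M1 every robber answer is threatened. -/
lemma step_M1 (hfree : IsEmpty ((pathGraph 1 ⊕g pathGraph (N+3)) ↪g G))
    {c : Fin (N+2) → V} {r r' : V} (h1 : PatM1 G u₀ N c r) (hn : ¬ Thr G c r)
    (hr' : r' = r ∨ G.Adj r r') :
    Thr G (Fstrat G u₀ N c r) r' := by
  by_contra hnt
  rw [F_of_M1 G u₀ N hn h1] at hnt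
  obtain ⟨hpost, hδadj, hδout, hNbr, hδr, hrB⟩ := h1
  have hun : ∀ i : Fin (N+2),
      ¬ Nb G (Function.update c ⟨N, by omega⟩ (pu G u₀ r (N+1)) i) r' :=
    fun i hi => hnt ⟨i, hi⟩
  have hu1 : ∀ ℓ, ℓ < N → ¬ Nb G (pu G u₀ r ℓ) r' := by
    intro ℓ hℓ
    have h := hun ⟨ℓ, by omega⟩
    rw [Function.update_of_ne (Fin.ne_of_val_ne (show ℓ ≠ N by omega))] at h
    rwa [hpost ⟨ℓ, by omega⟩ (show ℓ < N+1 by omega)] at h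
  have huN1 : ¬ Nb G (pu G u₀ r (N+1)) r' := by
    have h := hun ⟨N, by omega⟩
    rwa [Function.update_self] at h
  have huδ : ¬ Nb G (c (Fin.last (N+1))) r' := by
    have h := hun (Fin.last (N+1))
    rwa [Function.update_of_ne (Fin.ne_of_val_ne (show N+1 ≠ N by omega))] at h
  have hadj : G.Adj r r' := by
    rcases hr' with rfl | h
    · exact absurd hNbr huN1
    · exact h
  -- Step A : the path (posts 0..N+1, δ) is an induced P_{N+3} dominating everything,
  -- hence r' must be in the closed neighborhood of post N.
  have hNb2 : Nb G (pu G u₀ r N) r' := by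
    by_contra hA
    apply no_P1_Pk G hfree
      (fun i : Fin (N+3) => if h : i.val ≤ N+1 then pu G u₀ r i.val else c (Fin.last (N+1))) r'
    · intro i j hij
      have hjL := j.isLt
      by_cases hjv : j.val ≤ N+1
      · have hiv : i.val ≤ N+1 := by omega
        rw [dif_pos hiv, dif_pos hjv, ← hij]
        exact post_adj G u₀ hconn (not_bset_le G (by omega) hrB)
      · have hiv : i.val ≤ N+1 := by omega
        rw [dif_pos hiv, dif_neg hjv]
        have hival : i.val = N+1 := by omega
        rw [hival]
        exact hδadj.symm
    · intro i j hij
      have hjL := j.isLt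
      by_cases hjv : j.val ≤ N+1
      · rw [dif_pos (show i.val ≤ N+1 by omega), dif_pos hjv]
        exact post_noadj G u₀ hconn hrB hij hjv
      · rw [dif_pos (show i.val ≤ N+1 by omega), dif_neg hjv]
        intro hnb
        exact hδout ⟨i.val, by omega, hnb⟩
    · intro i
      have hiL := i.isLt
      by_cases hiv : i.val ≤ N+1
      · rw [dif_pos hiv]
        rcases Nat.lt_trichotomy i.val N with h | h | h
        · exact hu1 i.val h
        · rw [h]
          exact hA
        · have hival : i.val = N+1 := by omega
          rw [hival]
          exact huN1
      · rw [dif_neg hiv]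
        exact huδ
  have hA2 : G.Adj (pu G u₀ r N) r' := by
    rcases hNb2 with heq | h
    · exfalso
      apply huN1
      rw [heq]
      exact Or.inr (post_adj G u₀ hconn (not_bset_le G (by omega) hrB)).symm
    · exact h
  -- Step B : the kill. The path (posts 0..N, r', r) is an induced P_{N+3} and δ has
  -- no neighbor on it, contradicting (P1+Pk)-freeness.
  apply no_P1_Pk G hfree
    (fun i : Fin (N+3) =>
      if i.val ≤ N then pu G u₀ r i.val else if i.val = N+1 then r' else r)
    (c (Fin.last (N+1)))
  · intro i j hij
    have hjL := j.isLt
    by_cases hjv : j.val ≤ N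
    · rw [if_pos (show i.val ≤ N by omega), if_pos hjv, ← hij]
      exact post_adj G u₀ hconn (not_bset_le G (by omega) hrB)
    · by_cases hjv2 : j.val = N+1
      · rw [if_pos (show i.val ≤ N by omega), if_neg hjv, if_pos hjv2]
        have hival : i.val = N := by omega
        rw [hival]
        exact hA2
      · have hj3 : j.val = N+2 := by omega
        have hi2 : i.val = N+1 := by omega
        rw [if_neg (show ¬ i.val ≤ N by omega), if_pos hi2,
          if_neg (show ¬ j.val ≤ N by omega), if_neg (show ¬ j.val = N+1 by omega)]
        exact hadj.symm
  · intro i j hij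
    have hjL := j.isLt
    by_cases hjv : j.val ≤ N
    · rw [if_pos (show i.val ≤ N by omega), if_pos hjv]
      exact post_noadj G u₀ hconn hrB hij (by omega)
    · by_cases hjv2 : j.val = N+1
      · rw [if_pos (show i.val ≤ N by omega), if_neg hjv, if_pos hjv2]
        exact hu1 i.val (by omega)
      · have hj3 : j.val = N+2 := by omega
        rw [if_pos (show i.val ≤ N by omega), if_neg (show ¬ j.val ≤ N by omega),
          if_neg (show ¬ j.val = N+1 by omega)]
        intro hnb
        exact hrB ⟨i.val, by omega, hnb⟩
  · intro i
    have hiL := i.isLt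
    by_cases hiv : i.val ≤ N
    · rw [if_pos hiv]
      intro hnb
      exact hδout ⟨i.val, by omega, hnb⟩
    · by_cases hiv2 : i.val = N+1
      · rw [if_neg hiv, if_pos hiv2]
        exact fun h => huδ (nb_symm G h)
      · rw [if_neg hiv, if_neg hiv2]
        exact fun h => hδr (nb_symm G h)

include hconn in
/-- From pattern M0, any unthreatened robber answer leads to pattern M1. -/
lemma step_M0 (hfree : IsEmpty ((pathGraph 1 ⊕g pathGraph (N+3)) ↪g G))
    {c : Fin (N+2) → V} {r r' : V} (h0 : PatM0 G u₀ N c r) (hn : ¬ Thr G c r)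
    (h1 : ¬ PatM1 G u₀ N c r) (hr' : r' = r ∨ G.Adj r r')
    (hnt : ¬ Thr G (Fstrat G u₀ N c r) r') :
    PatM1 G u₀ N (Fstrat G u₀ N c r) r' := by
  rw [F_of_M0 G u₀ N hn h1 h0] at hnt ⊢
  obtain ⟨hpost, hrB⟩ := h0
  have hun : ∀ i : Fin (N+2),
      ¬ Nb G (Function.update c (Fin.last (N+1)) (pu G u₀ r (N+2)) i) r' :=
    fun i hi => hnt ⟨i, hi⟩
  have hu1 : ∀ ℓ, ℓ < N+1 → ¬ Nb G (pu G u₀ r ℓ) r' := by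
    intro ℓ hℓ
    have h := hun ⟨ℓ, by omega⟩
    rw [Function.update_of_ne (Fin.ne_of_val_ne (show ℓ ≠ N+1 by omega))] at h
    rwa [show c ⟨ℓ, by omega⟩ = pu G u₀ r ℓ from hpost ⟨ℓ, by omega⟩] at h
  have hu2 : ¬ Nb G (pu G u₀ r (N+2)) r' := by
    have h := hun (Fin.last (N+1))
    rwa [Function.update_self] at h
  have hNb : Nb G (pu G u₀ r (N+1)) r' := by
    obtain ⟨i, hiN, hnb⟩ := dominating G u₀ hconn N hfree hrB r'
    rcases Nat.lt_trichotomy i (N+1) with h | h | h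
    · exact absurd hnb (hu1 i h)
    · rwa [h] at hnb
    · have hival : i = N+2 := by omega
      rw [hival] at hnb
      exact absurd hnb hu2
  have hadj : G.Adj r r' := by
    rcases hr' with rfl | h
    · exact absurd ⟨N+1, by omega, hNb⟩ hrB
    · exact h
  have hrB1 : r ∉ Bset G (pu G u₀ r) (N+1) := not_bset_le G (by omega) hrB
  have hr'B1 : r' ∉ Bset G (pu G u₀ r) (N+1) := by
    rintro ⟨ℓ, hℓ, hnb⟩
    exact hu1 ℓ hℓ hnb
  have hU : ∀ i ≤ N+1, pu G u₀ r' i = pu G u₀ r i :=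
    pu_stable G u₀ hconn hadj hrB1 hr'B1
  have hBeq : Bset G (pu G u₀ r') (N+1) = Bset G (pu G u₀ r) (N+1) :=
    bset_congr G (N+1) (fun i hi => hU i (by omega))
  refine ⟨?_, ?_, ?_, ?_, ?_, ?_⟩
  · intro i hi
    rw [Function.update_of_ne (Fin.ne_of_val_ne (show i.val ≠ N+1 by omega)), hpost i]
    exact (hU i.val (by omega)).symm
  · rw [Function.update_self, hU (N+1) (by omega)]
    exact (post_adj G u₀ hconn hrB).symm
  · rw [Function.update_self, hBeq]
    exact post_out G u₀ hconn hrB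
  · rw [hU (N+1) (by omega)]
    exact hNb
  · rw [Function.update_self]
    exact hu2
  · rw [hBeq]
    exact hr'B1

include hconn in
/-- From a walking pattern, any unthreatened robber answer keeps a good pattern and
decreases the measure. -/
lemma step_P {c : Fin (N+2) → V} {r r' : V} {j m : ℕ}
    (hp : PatP G u₀ N c r j m) (hn : ¬ Thr G c r) (h1 : ¬ PatM1 G u₀ N c r)
    (h0 : ¬ PatM0 G u₀ N c r) (hr' : r' = r ∨ G.Adj r r')
    (hnt : ¬ Thr G (Fstrat G u₀ N c r) r') :
    GoodS G u₀ N (Fstrat G u₀ N c r) r' ∧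
      muS G u₀ N (Fstrat G u₀ N c r) r' < muS G u₀ N c r := by
  have hFP := F_of_P G u₀ hconn N hn h1 h0 hp
  have hmuold := mu_of_P G u₀ hconn N h1 h0 hp
  obtain ⟨hj1, hjN, hmj, hpost, htrail, hmwit, hrB⟩ := hp
  rw [hFP] at hnt ⊢
  rw [hmuold]
  have hun : ∀ i : Fin (N+2),
      ¬ Nb G (Function.update c ⟨j, by omega⟩ (pu G u₀ r (m+1)) i) r' :=
    fun i hi => hnt ⟨i, hi⟩
  have hu1 : ∀ ℓ, ℓ < j → ¬ Nb G (pu G u₀ r ℓ) r' := by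
    intro ℓ hℓ
    have h := hun ⟨ℓ, by omega⟩
    rw [Function.update_of_ne (Fin.ne_of_val_ne (show ℓ ≠ j by omega))] at h
    rwa [show c ⟨ℓ, by omega⟩ = pu G u₀ r ℓ from hpost ⟨ℓ, by omega⟩ hℓ] at h
  have hu2 : ¬ Nb G (pu G u₀ r (m+1)) r' := by
    have h := hun ⟨j, by omega⟩
    rwa [Function.update_self] at h
  have hr'B : r' ∉ Bset G (pu G u₀ r) j := by
    rintro ⟨ℓ, hℓ, hnb⟩
    exact hu1 ℓ hℓ hnb
  have hU : ∀ i ≤ j, pu G u₀ r' i = pu G u₀ r i := by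
    rcases hr' with rfl | hadj
    · intro i _; rfl
    · exact pu_stable G u₀ hconn hadj hrB hr'B
  have hBeq : Bset G (pu G u₀ r') j = Bset G (pu G u₀ r) j :=
    bset_congr G j (fun i hi => hU i (by omega))
  by_cases hcase : m + 1 < j
  · -- walk continues: new pattern P (j, m+1)
    have hnew : PatP G u₀ N (Function.update c ⟨j, by omega⟩ (pu G u₀ r (m+1))) r' j (m+1) := by
      refine ⟨by omega, hjN, hcase, ?_, ?_, ?_, ?_⟩
      · intro i hi
        rw [Function.update_of_ne (Fin.ne_of_val_ne (show i.val ≠ j by omega)), hpost i hi]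
        exact (hU i.val (by omega)).symm
      · intro i hi
        rw [Function.update_of_ne (Fin.ne_of_val_ne (show i.val ≠ j by omega))]
        exact htrail i hi
      · intro hj
        have hidx : (⟨j, hj⟩ : Fin (N+2)) = ⟨j, by omega⟩ := rfl
        rw [hidx, Function.update_self]
        exact (hU (m+1) (by omega)).symm
      · rw [hBeq]
        exact hr'B
    refine ⟨Or.inr (Or.inr ⟨j, m+1, hnew⟩), ?_⟩
    have hle := mu_le_of_P G u₀ hconn N hnew
    generalize hq : (N + 2 - j) * (N + 5) = Q at hle ⊢
    omega
  · have hmj1 : m + 1 = j := by omega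
    by_cases hjcase : j ≤ N
    · -- arrival at post j, next walker starts: new pattern P (j+1, 0)
      have hnew : PatP G u₀ N (Function.update c ⟨j, by omega⟩ (pu G u₀ r (m+1))) r' (j+1) 0 := by
        refine ⟨by omega, by omega, by omega, ?_, ?_, ?_, ?_⟩
        · intro i hi
          rcases Nat.lt_or_ge i.val j with h | h
          · rw [Function.update_of_ne (Fin.ne_of_val_ne (show i.val ≠ j by omega)), hpost i h]
            exact (hU i.val (by omega)).symm
          · have hival : i.val = j := by omega
            have hidx : i = (⟨j, by omega⟩ : Fin (N+2)) := Fin.ext hival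
            rw [Function.update_apply, if_pos hidx, hival, hmj1]
            exact (hU j (by omega)).symm
        · intro i hi
          rw [Function.update_of_ne (Fin.ne_of_val_ne (show i.val ≠ j by omega))]
          exact htrail i (by omega)
        · intro hj
          rw [Function.update_of_ne (Fin.ne_of_val_ne (show j+1 ≠ j by omega))]
          rw [htrail ⟨j+1, hj⟩ (show j < j+1 by omega)]
          rw [pu_zero]
        · rintro ⟨ℓ, hℓ, hnb⟩
          rcases Nat.lt_or_ge ℓ j with h | h
          · rw [hU ℓ (by omega)] at hnb
            exact hu1 ℓ h hnb
          · have hval : ℓ = j := by omega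
            subst hval
            rw [hU ℓ (by omega), ← hmj1] at hnb
            exact hu2 hnb
      refine ⟨Or.inr (Or.inr ⟨j+1, 0, hnew⟩), ?_⟩
      have hle := mu_le_of_P G u₀ hconn N hnew
      have hexp : (N + 2 - j) * (N + 5) = (N + 2 - (j+1)) * (N + 5) + (N + 5) := by
        have h6 : N + 2 - j = (N + 2 - (j+1)) + 1 := by omega
        rw [h6, Nat.succ_mul]
      rw [hexp]
      generalize hq : (N + 2 - (j+1)) * (N + 5) = Q at hle ⊢
      omega
    · -- arrival at the last post: pattern M0
      have hjval : j = N+1 := by omega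
      have hnew : PatM0 G u₀ N (Function.update c ⟨j, by omega⟩ (pu G u₀ r (m+1))) r' := by
        constructor
        · intro i
          rcases Nat.lt_or_ge i.val j with h | h
          · rw [Function.update_of_ne (Fin.ne_of_val_ne (show i.val ≠ j by omega)), hpost i h]
            exact (hU i.val (by omega)).symm
          · have hival : i.val = j := by omega
            have hidx : i = (⟨j, by omega⟩ : Fin (N+2)) := Fin.ext hival
            rw [Function.update_apply, if_pos hidx, hival, hmj1]
            exact (hU j (by omega)).symm
        · rintro ⟨ℓ, hℓ, hnb⟩
          rcases Nat.lt_or_ge ℓ j with h | h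
          · rw [hU ℓ (by omega)] at hnb
            exact hu1 ℓ h hnb
          · have hval : ℓ = j := by omega
            subst hval
            rw [hU ℓ (by omega), ← hmj1] at hnb
            exact hu2 hnb
      refine ⟨Or.inr (Or.inl hnew), ?_⟩
      have hle := mu_le_of_M0 G u₀ N hnew
      generalize hq : (N + 2 - j) * (N + 5) = Q
      omega

include hconn in
/-- the global one-step lemma -/
lemma step_main (hfree : IsEmpty ((pathGraph 1 ⊕g pathGraph (N+3)) ↪g G)) :
    ∀ c r r', GoodS G u₀ N c r → ¬ Thr G c r → (r' = r ∨ G.Adj r r') →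
    Thr G (Fstrat G u₀ N c r) r' ∨
      (GoodS G u₀ N (Fstrat G u₀ N c r) r' ∧
        muS G u₀ N (Fstrat G u₀ N c r) r' < muS G u₀ N c r) := by
  intro c r r' hGood hn hr'
  by_cases h1 : PatM1 G u₀ N c r
  · exact Or.inl (step_M1 G u₀ hconn N hfree h1 hn hr')
  by_cases hnt : Thr G (Fstrat G u₀ N c r) r'
  · exact Or.inl hnt
  right
  by_cases h0 : PatM0 G u₀ N c r
  · have hM1' := step_M0 G u₀ hconn N hfree h0 hn h1 hr' hnt
    refine ⟨Or.inl hM1', ?_⟩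
    rw [mu_of_M1 G u₀ N hM1', mu_of_M0 G u₀ N h1 h0]
    omega
  · rcases hGood with h | h | ⟨j, m, hp⟩
    · exact absurd h h1
    · exact absurd h h0
    · exact step_P G u₀ hconn N hp hn h1 h0 hr' hnt

lemma init_good (r₀ : V) :
    Thr G (fun _ : Fin (N+2) => u₀) r₀ ∨ GoodS G u₀ N (fun _ : Fin (N+2) => u₀) r₀ := by
  by_cases h : Thr G (fun _ : Fin (N+2) => u₀) r₀
  · exact Or.inl h
  · right
    refine Or.inr (Or.inr ⟨1, 0, le_refl 1, by omega, by omega, ?_, ?_, ?_, ?_⟩)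
    · intro i hi
      have hival : i.val = 0 := by omega
      rw [hival, pu_zero]
    · intro i hi
      rfl
    · intro hj
      rw [pu_zero]
    · rintro ⟨ℓ, hℓ, hnb⟩
      have hval : ℓ = 0 := by omega
      subst hval
      rw [pu_zero] at hnb
      exact h ⟨⟨0, by omega⟩, hnb⟩

end Strategy

end CnR

theorem cop_number_of_P1_Pk_free {V : Type*} [Fintype V] (G : SimpleGraph V) (k : ℕ)
    (hk : 3 ≤ k) (hconn : G.Connected)
    (hfree : IsEmpty ((pathGraph 1 ⊕g pathGraph k) ↪g G)) :
    copNumber G ≤ k - 1 := by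
  obtain ⟨N, rfl⟩ : ∃ N, k = N + 3 := ⟨k - 3, by omega⟩
  have hwin : CopWinWith G (N + 2) := by
    obtain ⟨u₀⟩ := hconn.nonempty
    refine ⟨fun _ => u₀, CnR.Fstrat G u₀ N, CnR.F_legal G u₀ hconn N, ?_⟩
    intro r₀ rob hrob
    exact CnR.capture_master G (fun _ => u₀) (CnR.Fstrat G u₀ N)
      (CnR.GoodS G u₀ N) (CnR.muS G u₀ N)
      (fun c r h => CnR.F_of_thr G u₀ N h)
      (CnR.step_main G u₀ hconn N hfree)
      r₀ rob hrob (CnR.init_good G u₀ N r₀)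
  have h2 : copNumber G ≤ N + 2 := Nat.sInf_le hwin
  omega
end
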